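/- arXiv:2201.03015 — 4 statements merged into one kernel-verified Lean document; each statement's English description precedes it below -/
import Mathlib

section
/- Let r ≥ 0 be an integer. For every natural number n, the number of partitions of n in which every part whose multiplicity is odd has multiplicity at least 2r + 1 equals the number of partitions of n in which every odd part is congruent to 2r + 1 modulo 4r + 2. -/
/-
Copyright (c) 2020 Bhavik Mehta, Aaron Anderson. All rights reserved.
Released under Apache 2.0 license as described in the file LICENSE.
Authors: Bhavik Mehta, Aaron Anderson
-/

/-!
# Euler's Partition Theorem

This file proves Theorem 45 from the [100 Theorems List](https://www.cs.ru.nl/~freek/100/).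

The theorem concerns the counting of integer partitions -- ways of
writing a positive integer `n` as a sum of positive integer parts.

Specifically, Euler proved that the number of integer partitions of `n`
into *distinct* parts equals the number of partitions of `n` into *odd*
parts.

## Proof outline

The proof is based on the generating functions for odd and distinct partitions, which turn out to be
equal:

$$\prod_{i=0}^\infty \frac {1}{1-X^{2i+1}} = \prod_{i=0}^\infty (1+X^{i+1})$$

In fact, we do not take a limit: it turns out that comparing the `n`'th coefficients of the partial
products up to `m := n + 1` is sufficient.

In particular, we

1. define the partial product for the generating function for odd partitions `partialOddGF m` :=
  $$\prod_{i=0}^m \frac {1}{1-X^{2i+1}}$$;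
2. prove `oddGF_prop`: if `m` is big enough (`m * 2 > n`), the partial product's coefficient counts
  the number of odd partitions;
3. define the partial product for the generating function for distinct partitions
  `partialDistinctGF m` := $$\prod_{i=0}^m (1+X^{i+1})$$;
4. prove `distinctGF_prop`: if `m` is big enough (`m + 1 > n`), the `n`th coefficient of the
  partial product counts the number of distinct partitions of `n`;
5. prove `same_coeffs`: if m is big enough (`m ≥ n`), the `n`th coefficient of the partial products
  are equal;
6. combine the above in `partition_theorem`.

## References
https://en.wikipedia.org/wiki/Partition_(number_theory)#Odd_parts_and_distinct_parts
-/


open PowerSeries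

namespace Theorems100

noncomputable section

variable {α : Type*}

open Finset

open scoped Classical

/-- The partial product for the generating function for odd partitions.
TODO: As `m` tends to infinity, this converges (in the `X`-adic topology).

If `m` is sufficiently large, the `i`th coefficient gives the number of odd partitions of the
natural number `i`: proved in `oddGF_prop`.
It is stated for an arbitrary field `α`, though it usually suffices to use `ℚ` or `ℝ`.
-/
def partialOddGF (m : ℕ) [Field α] :=
  ∏ i ∈ range m, (1 - (X : PowerSeries α) ^ (2 * i + 1))⁻¹

/-- The partial product for the generating function for distinct partitions.
TODO: As `m` tends to infinity, this converges (in the `X`-adic topology).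

If `m` is sufficiently large, the `i`th coefficient gives the number of distinct partitions of the
natural number `i`: proved in `distinctGF_prop`.
It is stated for an arbitrary commutative semiring `α`, though it usually suffices to use `ℕ`, `ℚ`
or `ℝ`.
-/
def partialDistinctGF (m : ℕ) [CommSemiring α] :=
  ∏ i ∈ range m, (1 + (X : PowerSeries α) ^ (i + 1))

open Finset.HasAntidiagonal

universe u
variable {ι : Type u}

/-- A convenience constructor for the power series whose coefficients indicate a subset. -/
def indicatorSeries (α : Type*) [Semiring α] (s : Set ℕ) : PowerSeries α :=
  PowerSeries.mk fun n => if n ∈ s then 1 else 0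

theorem coeff_indicator (s : Set ℕ) [Semiring α] (n : ℕ) :
    coeff (R := α) n (indicatorSeries _ s) = if n ∈ s then 1 else 0 :=
  coeff_mk _ _

theorem coeff_indicator_pos (s : Set ℕ) [Semiring α] (n : ℕ) (h : n ∈ s) :
    coeff (R := α) n (indicatorSeries _ s) = 1 := by rw [coeff_indicator, if_pos h]

theorem coeff_indicator_neg (s : Set ℕ) [Semiring α] (n : ℕ) (h : n ∉ s) :
    coeff (R := α) n (indicatorSeries _ s) = 0 := by rw [coeff_indicator, if_neg h]

theorem constantCoeff_indicator (s : Set ℕ) [Semiring α] :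
    constantCoeff (R := α) (indicatorSeries _ s) = if 0 ∈ s then 1 else 0 :=
  rfl

theorem two_series (i : ℕ) [Semiring α] :
    1 + (X : PowerSeries α) ^ i.succ = indicatorSeries α {0, i.succ} := by
  ext n
  simp only [coeff_indicator, coeff_one, coeff_X_pow, Set.mem_insert_iff, Set.mem_singleton_iff,
    map_add]
  cases' n with d
  · simp [(Nat.succ_ne_zero i).symm]
  · simp [Nat.succ_ne_zero d]

theorem num_series' [Field α] (i : ℕ) :
    (1 - (X : PowerSeries α) ^ (i + 1))⁻¹ = indicatorSeries α {k | i + 1 ∣ k} := by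
  rw [PowerSeries.inv_eq_iff_mul_eq_one]
  · ext n
    cases n with
    | zero => simp [mul_sub, zero_pow, constantCoeff_indicator]
    | succ n =>
      simp only [coeff_one, if_false, mul_sub, mul_one, coeff_indicator,
        LinearMap.map_sub, reduceCtorEq]
      simp_rw [coeff_mul, coeff_X_pow, coeff_indicator, @boole_mul _ _ _ _]
      simp only [Set.mem_setOf_eq]
      erw [sum_ite, sum_ite]
      simp_rw [@filter_filter _ _ _ _ _, sum_const_zero, add_zero, sum_const, nsmul_eq_mul, mul_one,
        sub_eq_iff_eq_add, zero_add]
      symm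
      split_ifs with h
      · suffices #{a ∈ antidiagonal (n + 1) | i + 1 ∣ a.fst ∧ a.snd = i + 1} = 1 by
          convert congr_arg ((↑) : ℕ → α) this; norm_cast
        rw [card_eq_one]
        cases' h with p hp
        refine ⟨((i + 1) * (p - 1), i + 1), ?_⟩
        ext ⟨a₁, a₂⟩
        simp only [mem_filter, Prod.mk.injEq, HasAntidiagonal.mem_antidiagonal, mem_singleton]
        constructor
        · rintro ⟨a_left, ⟨a, rfl⟩, rfl⟩
          refine ⟨?_, rfl⟩
          rw [Nat.mul_sub_left_distrib, ← hp, ← a_left, mul_one, Nat.add_sub_cancel]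
        · rintro ⟨rfl, rfl⟩
          match p with
          | 0 => rw [mul_zero] at hp; cases hp
          | p + 1 => rw [hp]; simp [mul_add]
      · suffices #{a ∈ antidiagonal (n + 1) | i + 1 ∣ a.fst ∧ a.snd = i + 1} = 0 by
          convert congr_arg ((↑) : ℕ → α) this; norm_cast
        rw [card_eq_zero]
        apply eq_empty_of_forall_notMem
        simp only [Prod.forall, mem_filter, not_and, HasAntidiagonal.mem_antidiagonal]
        rintro _ h₁ h₂ ⟨a, rfl⟩ rfl
        apply h
        simp [← h₂]
  · simp [zero_pow]

def mkOdd : ℕ ↪ ℕ :=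
  ⟨fun i => 2 * i + 1, fun x y h => by linarith⟩

-- The main workhorse of the partition theorem proof.
theorem partialGF_prop (α : Type*) [CommSemiring α] (n : ℕ) (s : Finset ℕ) (hs : ∀ i ∈ s, 0 < i)
    (c : ℕ → Set ℕ) (hc : ∀ i, i ∉ s → 0 ∈ c i) :
    #{p : n.Partition | (∀ j, p.parts.count j ∈ c j) ∧ ∀ j ∈ p.parts, j ∈ s} =
      coeff (R := α) n (∏ i ∈ s, indicatorSeries α ((· * i) '' c i)) := by
  simp_rw [coeff_prod, coeff_indicator, prod_boole, sum_boole]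
  apply congr_arg
  simp only [mem_univ, forall_true_left, not_and, not_forall, exists_prop,
    Set.mem_image, not_exists]
  set φ : (a : Nat.Partition n) →
    a ∈ filter (fun p ↦ (∀ (j : ℕ), Multiset.count j p.parts ∈ c j) ∧ ∀ j ∈ p.parts, j ∈ s) univ →
    ℕ →₀ ℕ := fun p _ => {
      toFun := fun i => Multiset.count i p.parts • i
      support := Finset.filter (fun i => i ≠ 0) p.parts.toFinset
      mem_support_toFun := fun a => by
        simp only [smul_eq_mul, ne_eq, mul_eq_zero, Multiset.count_eq_zero]
        rw [not_or, not_not]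
        simp only [Multiset.mem_toFinset, not_not, mem_filter] }
  refine Finset.card_bij φ ?_ ?_ ?_
  · intro a ha
    simp only [φ, not_forall, not_exists, not_and, exists_prop, mem_filter]
    rw [mem_finsuppAntidiag]
    dsimp only [ne_eq, smul_eq_mul, id_eq, eq_mpr_eq_cast, le_eq_subset, Finsupp.coe_mk]
    simp only [mem_univ, forall_true_left, not_and, not_forall, exists_prop,
      mem_filter, true_and] at ha
    refine ⟨⟨?_, fun i ↦ ?_⟩, fun i _ ↦ ⟨a.parts.count i, ha.1 i, rfl⟩⟩
    · conv_rhs => simp [← a.parts_sum]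
      rw [sum_multiset_count_of_subset _ s]
      · simp only [smul_eq_mul]
      · intro i
        simp only [Multiset.mem_toFinset, not_not, mem_filter]
        apply ha.2
    · simp only [ne_eq, Multiset.mem_toFinset, not_not, mem_filter, and_imp]
      exact fun hi _ ↦ ha.2 i hi
  · intro p₁ hp₁ p₂ hp₂ h
    apply Nat.Partition.ext
    simp only [true_and, mem_univ, mem_filter] at hp₁ hp₂
    ext i
    simp only [φ, ne_eq, Multiset.mem_toFinset, not_not, smul_eq_mul, Finsupp.mk.injEq] at h
    by_cases hi : i = 0
    · rw [hi]
      rw [Multiset.count_eq_zero_of_notMem]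
      · rw [Multiset.count_eq_zero_of_notMem]
        intro a; exact Nat.lt_irrefl 0 (hs 0 (hp₂.2 0 a))
      intro a; exact Nat.lt_irrefl 0 (hs 0 (hp₁.2 0 a))
    · rw [← mul_left_inj' hi]
      rw [funext_iff] at h
      exact h.2 i
  · simp only [φ, mem_filter, mem_finsuppAntidiag, mem_univ, exists_prop, true_and, and_assoc]
    rintro f ⟨hf, hf₃, hf₄⟩
    have hf' : f ∈ finsuppAntidiag s n := mem_finsuppAntidiag.mpr ⟨hf, hf₃⟩
    simp only [mem_finsuppAntidiag] at hf'
    refine ⟨⟨∑ i ∈ s, Multiset.replicate (f i / i) i, ?_, ?_⟩, ?_, ?_, ?_⟩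
    · intro i hi
      simp only [exists_prop, Multiset.mem_sum, mem_map, Function.Embedding.coeFn_mk] at hi
      rcases hi with ⟨t, ht, z⟩
      apply hs
      rwa [Multiset.eq_of_mem_replicate z]
    · simp_rw [Multiset.sum_sum, Multiset.sum_replicate, Nat.nsmul_eq_mul]
      rw [← hf'.1]
      refine sum_congr rfl fun i hi => Nat.div_mul_cancel ?_
      rcases hf₄ i hi with ⟨w, _, hw₂⟩
      rw [← hw₂]
      exact dvd_mul_left _ _
    · intro i
      simp_rw [Multiset.count_sum', Multiset.count_replicate, sum_ite_eq']
      split_ifs with h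
      · rcases hf₄ i h with ⟨w, hw₁, hw₂⟩
        rwa [← hw₂, Nat.mul_div_cancel _ (hs i h)]
      · exact hc _ h
    · intro i hi
      rw [Multiset.mem_sum] at hi
      rcases hi with ⟨j, hj₁, hj₂⟩
      rwa [Multiset.eq_of_mem_replicate hj₂]
    · ext i
      simp_rw [Multiset.count_sum', Multiset.count_replicate, sum_ite_eq']
      simp only [ne_eq, Multiset.mem_toFinset, not_not, smul_eq_mul, ite_mul,
        zero_mul, Finsupp.coe_mk]
      split_ifs with h
      · apply Nat.div_mul_cancel
        rcases hf₄ i h with ⟨w, _, hw₂⟩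
        apply Dvd.intro_left _ hw₂
      · apply symm
        rw [← Finsupp.notMem_support_iff]
        exact notMem_mono hf'.2 h

theorem partialOddGF_prop [Field α] (n m : ℕ) :
    #{p : n.Partition | ∀ j ∈ p.parts, j ∈ (range m).map mkOdd} = coeff (R := α) n (partialOddGF m) := by
  rw [partialOddGF]
  convert partialGF_prop α n
    ((range m).map mkOdd) _ (fun _ => Set.univ) (fun _ _ => trivial) using 2
  · congr
    simp only [true_and, forall_const, Set.mem_univ]
  · rw [Finset.prod_map]
    simp_rw [num_series']
    congr! 2 with x
    ext k
    constructor
    · rintro ⟨p, rfl⟩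
      refine ⟨p, ⟨⟩, ?_⟩
      apply mul_comm
    rintro ⟨a_w, -, rfl⟩
    apply Dvd.intro_left a_w rfl
  · intro i
    rw [mem_map]
    rintro ⟨a, -, rfl⟩
    exact Nat.succ_pos _

/-- If m is big enough, the partial product's coefficient counts the number of odd partitions -/
theorem oddGF_prop [Field α] (n m : ℕ) (h : n < m * 2) :
    #(Nat.Partition.odds n) = coeff (R := α) n (partialOddGF m) := by
  rw [← partialOddGF_prop, Nat.Partition.odds, Nat.Partition.restricted]
  congr with p
  apply forall₂_congr
  intro i hi
  have hin : i ≤ n := by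
    simpa [p.parts_sum] using Multiset.single_le_sum (fun _ _ => Nat.zero_le _) _ hi
  simp only [mkOdd, exists_prop, mem_range, Function.Embedding.coeFn_mk, mem_map]
  constructor
  · intro hi₂
    have := Nat.mod_add_div i 2
    rw [Nat.not_even_iff] at hi₂
    rw [hi₂, add_comm] at this
    refine ⟨i / 2, ?_, this⟩
    rw [Nat.div_lt_iff_lt_mul zero_lt_two]
    exact lt_of_le_of_lt hin h
  · rintro ⟨a, -, rfl⟩
    rw [even_iff_two_dvd]
    apply Nat.two_not_dvd_two_mul_add_one

theorem partialDistinctGF_prop [CommSemiring α] (n m : ℕ) :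
    #{p : n.Partition |
        p.parts.Nodup ∧ ∀ j ∈ p.parts, j ∈ (range m).map ⟨Nat.succ, Nat.succ_injective⟩} =
      coeff (R := α) n (partialDistinctGF m) := by
  rw [partialDistinctGF]
  convert partialGF_prop α n
    ((range m).map ⟨Nat.succ, Nat.succ_injective⟩) _ (fun _ => {0, 1}) (fun _ _ => Or.inl rfl)
    using 2
  · congr! with p
    rw [Multiset.nodup_iff_count_le_one]
    congr! 1 with i
    rcases Multiset.count i p.parts with (_ | _ | ms) <;> simp
  · simp_rw [Finset.prod_map, two_series]
    congr with i
    simp [Set.image_pair]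
  · simp only [mem_map, Function.Embedding.coeFn_mk]
    rintro i ⟨_, _, rfl⟩
    apply Nat.succ_pos

/-- If m is big enough, the partial product's coefficient counts the number of distinct partitions
-/
theorem distinctGF_prop [CommSemiring α] (n m : ℕ) (h : n < m + 1) :
    #(Nat.Partition.distincts n) = coeff (R := α) n (partialDistinctGF m) := by
  rw [← partialDistinctGF_prop, Nat.Partition.distincts]
  congr with p
  apply (and_iff_left _).symm
  intro i hi
  have : i ≤ n := by
    simpa [p.parts_sum] using Multiset.single_le_sum (fun _ _ => Nat.zero_le _) _ hi
  simp only [mkOdd, exists_prop, mem_range, Function.Embedding.coeFn_mk, mem_map]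
  refine ⟨i - 1, ?_, Nat.succ_pred_eq_of_pos (p.parts_pos hi)⟩
  rw [tsub_lt_iff_right (Nat.one_le_iff_ne_zero.mpr (p.parts_pos hi).ne')]
  exact lt_of_le_of_lt this h

/-- The key proof idea for the partition theorem, showing that the generating functions for both
sequences are ultimately the same (since the factor converges to 0 as m tends to infinity).
It's enough to not take the limit though, and just consider large enough `m`.
-/
theorem same_gf [Field α] (m : ℕ) :
    (partialOddGF m * (range m).prod fun i => 1 - (X : PowerSeries α) ^ (m + i + 1)) =
      partialDistinctGF m := by
  rw [partialOddGF, partialDistinctGF]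
  induction' m with m ih
  · simp
  set! π₀ : PowerSeries α := ∏ i ∈ range m, (1 - X ^ (m + 1 + i + 1)) with hπ₀
  set! π₁ : PowerSeries α := ∏ i ∈ range m, (1 - X ^ (2 * i + 1))⁻¹ with hπ₁
  set! π₂ : PowerSeries α := ∏ i ∈ range m, (1 - X ^ (m + i + 1)) with hπ₂
  set! π₃ : PowerSeries α := ∏ i ∈ range m, (1 + X ^ (i + 1)) with hπ₃
  rw [← hπ₃] at ih
  have h : constantCoeff (R := α) (1 - X ^ (2 * m + 1)) ≠ 0 := by
    rw [RingHom.map_sub, RingHom.map_pow, constantCoeff_one, constantCoeff_X,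
      zero_pow (2 * m).succ_ne_zero, sub_zero]
    exact one_ne_zero
  calc
    (∏ i ∈ range (m + 1), (1 - X ^ (2 * i + 1))⁻¹) *
          ∏ i ∈ range (m + 1), (1 - X ^ (m + 1 + i + 1)) =
        π₁ * (1 - X ^ (2 * m + 1))⁻¹ * (π₀ * (1 - X ^ (m + 1 + m + 1))) := by
      rw [prod_range_succ _ m, ← hπ₁, prod_range_succ _ m, ← hπ₀]
    _ = π₁ * (1 - X ^ (2 * m + 1))⁻¹ * (π₀ * ((1 + X ^ (m + 1)) * (1 - X ^ (m + 1)))) := by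
      rw [← sq_sub_sq, one_pow, add_assoc _ m 1, ← two_mul (m + 1), pow_mul']
    _ = π₀ * (1 - X ^ (m + 1)) * (1 - X ^ (2 * m + 1))⁻¹ * (π₁ * (1 + X ^ (m + 1))) := by ring
    _ =
        (∏ i ∈ range (m + 1), (1 - X ^ (m + 1 + i))) * (1 - X ^ (2 * m + 1))⁻¹ *
          (π₁ * (1 + X ^ (m + 1))) := by
      rw [prod_range_succ', add_zero, hπ₀]; simp_rw [← add_assoc]
    _ = π₂ * (1 - X ^ (m + 1 + m)) * (1 - X ^ (2 * m + 1))⁻¹ * (π₁ * (1 + X ^ (m + 1))) := by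
      rw [add_right_comm, hπ₂, ← prod_range_succ]; simp_rw [add_right_comm]
    _ = π₂ * (1 - X ^ (2 * m + 1)) * (1 - X ^ (2 * m + 1))⁻¹ * (π₁ * (1 + X ^ (m + 1))) := by
      rw [two_mul, add_right_comm _ m 1]
    _ = (1 - X ^ (2 * m + 1)) * (1 - X ^ (2 * m + 1))⁻¹ * π₂ * (π₁ * (1 + X ^ (m + 1))) := by ring
    _ = π₂ * (π₁ * (1 + X ^ (m + 1))) := by rw [PowerSeries.mul_inv_cancel _ h, one_mul]
    _ = π₁ * π₂ * (1 + X ^ (m + 1)) := by ring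
    _ = π₃ * (1 + X ^ (m + 1)) := by rw [ih]
    _ = _ := by rw [prod_range_succ]

theorem same_coeffs [Field α] (m n : ℕ) (h : n ≤ m) :
    coeff (R := α) n (partialOddGF m) = coeff (R := α) n (partialDistinctGF m) := by
  rw [← same_gf, coeff_mul_prod_one_sub_of_lt_order]
  rintro i -
  rw [order_X_pow]
  exact mod_cast Nat.lt_succ_of_le (le_add_right h)

theorem partition_theorem (n : ℕ) : #(Nat.Partition.odds n) = #(Nat.Partition.distincts n) := by
  suffices (#(Nat.Partition.odds n) : ℚ) = #(Nat.Partition.distincts n) from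
    mod_cast this
  rw [distinctGF_prop n (n + 1) (by linarith)]
  rw [oddGF_prop n (n + 1) (by linarith)]
  apply same_coeffs (n + 1) n n.le_succ

end

end Theorems100


open Nat Multiset

namespace AndrewsMacMahonAux

theorem euler_card (m : ℕ) : (Nat.Partition.odds m).card = (Nat.Partition.distincts m).card :=
  Theorems100.partition_theorem m

/-- Index type for the sigma decomposition. -/
def T (r n : ℕ) := {x : ℕ × ℕ // 2 * x.1 + (2 * r + 1) * x.2 = n}

instance (r n : ℕ) : Finite (T r n) := by
  apply Finite.of_injective (fun x : T r n =>
    ((⟨x.1.1, by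
        have h := x.2
        have h1 : x.1.1 ≤ 2 * x.1.1 + (2 * r + 1) * x.1.2 := by omega
        omega⟩ : Fin (n + 1)),
     (⟨x.1.2, by
        have h := x.2
        have h1 : x.1.2 ≤ (2 * r + 1) * x.1.2 := Nat.le_mul_of_pos_left _ (by omega)
        omega⟩ : Fin (n + 1))))
  rintro ⟨⟨a, b⟩, hx⟩ ⟨⟨c, d⟩, hy⟩ h
  simp only [Prod.mk.injEq, Fin.mk.injEq] at h
  exact Subtype.ext (Prod.ext h.1 h.2)

/-- Distinct partitions as a subtype. -/
abbrev Dsub (m : ℕ) := {π : m.Partition // π.parts.Nodup}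

/-- Odd partitions as a subtype. -/
abbrev Osub (m : ℕ) := {π : m.Partition // ∀ i ∈ π.parts, ¬Even i}

theorem card_DO (m : ℕ) : Nat.card (Dsub m) = Nat.card (Osub m) := by
  have h1 : Nat.card (Dsub m) = Nat.card {π // π ∈ Nat.Partition.distincts m} :=
    Nat.card_congr (Equiv.subtypeEquivRight (by
      simp [Nat.Partition.distincts]))
  have h2 : Nat.card (Osub m) = Nat.card {π // π ∈ Nat.Partition.odds m} :=
    Nat.card_congr (Equiv.subtypeEquivRight (by
      simp [Nat.Partition.odds, Nat.Partition.restricted]))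
  rw [h1, h2, Nat.card_eq_fintype_card, Nat.card_eq_fintype_card,
    Fintype.card_coe, Fintype.card_coe]
  exact (euler_card m).symm

noncomputable def eulerEquiv (m : ℕ) : Dsub m ≃ Osub m :=
  (Finite.card_eq.mp (card_DO m)).some

theorem sigma_ext {r n : ℕ} {pr : ∀ m : ℕ, m.Partition → Prop}
    (a b : Σ x : T r n, x.1.1.Partition × {π : x.1.2.Partition // pr x.1.2 π})
    (h1 : a.2.1.parts = b.2.1.parts) (h2 : a.2.2.1.parts = b.2.2.1.parts) : a = b := by
  obtain ⟨⟨⟨w, m⟩, hx⟩, P, Q⟩ := a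
  obtain ⟨⟨⟨w', m'⟩, hx'⟩, P', Q'⟩ := b
  dsimp at h1 h2
  obtain rfl : w = w' := by
    have hp := P.parts_sum; have hp' := P'.parts_sum
    rw [h1] at hp; exact hp.symm.trans hp'
  obtain rfl : m = m' := by
    have hq := Q.1.parts_sum; have hq' := Q'.1.parts_sum
    rw [h2] at hq; exact hq.symm.trans hq'
  obtain rfl : P = P' := Nat.Partition.ext h1
  obtain rfl : Q = Q' := Subtype.ext (Nat.Partition.ext h2)
  rfl


/-! ### Generic multiset helpers -/

lemma mul_sum_ms (b : ℕ) (s : Multiset ℕ) : (s.map fun i => b * i).sum = b * s.sum := by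
  have := Multiset.sum_map_mul_left (s := s) (a := b) (f := id)
  simpa using this

lemma map_mul_div (b : ℕ) (s : Multiset ℕ) (h : ∀ i ∈ s, b ∣ i) :
    s.map (fun i => b * (i / b)) = s := by
  rw [Multiset.map_congr rfl (fun i hi => Nat.mul_div_cancel' (h i hi))]
  exact Multiset.map_id' s

lemma map_div_mul (b : ℕ) (hb : 0 < b) (s : Multiset ℕ) :
    (s.map (fun i => b * i)).map (fun i => i / b) = s := by
  rw [Multiset.map_map]
  rw [Multiset.map_congr rfl (fun i _ => by
    simp only [Function.comp_apply]
    exact Nat.mul_div_cancel_left i hb)]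
  exact Multiset.map_id' s

lemma odd_decomp {r i : ℕ} (hmod : i % (4 * r + 2) = 2 * r + 1) :
    i / (2 * r + 1) = 2 * (i / (4 * r + 2)) + 1 ∧ (2 * r + 1) * (i / (2 * r + 1)) = i := by
  have h := Nat.div_add_mod i (4 * r + 2)
  rw [hmod] at h
  set q := i / (4 * r + 2) with hq
  have hi : (2 * r + 1) * (2 * q + 1) = i := by rw [← h]; ring
  have hdiv : i / (2 * r + 1) = 2 * q + 1 := by
    rw [← hi, Nat.mul_div_cancel_left _ (by omega : 0 < 2 * r + 1)]
  exact ⟨hdiv, by rw [hdiv, hi]⟩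

/-! ### The B-side equivalence -/

section EquivB

variable (r n : ℕ)

def condB (π : n.Partition) : Prop := ∀ i ∈ π.parts, Odd i → i % (4 * r + 2) = 2 * r + 1

def bEven (π : n.Partition) : Multiset ℕ := (π.parts.filter (fun i => ¬Odd i)).map (· / 2)

def bOdd (π : n.Partition) : Multiset ℕ :=
  (π.parts.filter (fun i => Odd i)).map (· / (2 * r + 1))

lemma bEven_spec (π : n.Partition) :
    (bEven n π).map (fun i => 2 * i) = π.parts.filter (fun i => ¬Odd i) := by
  rw [bEven, Multiset.map_map]
  rw [show ((fun i => 2 * i) ∘ (· / 2)) = (fun i => 2 * (i / 2)) from rfl]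
  apply map_mul_div
  intro i hi
  have h2 := (Multiset.mem_filter.mp hi).2
  rw [Nat.not_odd_iff_even, Nat.even_iff] at h2
  exact Nat.dvd_of_mod_eq_zero h2

lemma bOdd_spec (π : n.Partition) (hπ : condB r n π) :
    (bOdd r n π).map (fun i => (2 * r + 1) * i) = π.parts.filter (fun i => Odd i) := by
  rw [bOdd, Multiset.map_map]
  rw [show ((fun i => (2 * r + 1) * i) ∘ (· / (2 * r + 1)))
      = (fun i => (2 * r + 1) * (i / (2 * r + 1))) from rfl]
  apply map_mul_div
  intro i hi
  obtain ⟨hmem, hodd⟩ := Multiset.mem_filter.mp hi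
  exact Dvd.intro _ (odd_decomp (hπ i hmem hodd)).2

lemma b_index (π : n.Partition) (hπ : condB r n π) :
    2 * (bEven n π).sum + (2 * r + 1) * (bOdd r n π).sum = n := by
  have h : 2 * (bEven n π).sum + (2 * r + 1) * (bOdd r n π).sum = π.parts.sum := by
    rw [← mul_sum_ms 2, ← mul_sum_ms (2 * r + 1), bEven_spec, bOdd_spec r n π hπ,
      add_comm, ← Multiset.sum_add, Multiset.filter_add_not]
  rw [h, π.parts_sum]

noncomputable def toB (π : n.Partition) (hπ : condB r n π) :
    Σ x : T r n, x.1.1.Partition × Osub x.1.2 :=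
  ⟨⟨((bEven n π).sum, (bOdd r n π).sum), b_index r n π hπ⟩,
    ⟨⟨bEven n π, by
        intro i hi
        simp only [bEven, Multiset.mem_map] at hi
        obtain ⟨j, hj, rfl⟩ := hi
        obtain ⟨hmem, hodd⟩ := Multiset.mem_filter.mp hj
        have := π.parts_pos hmem
        rw [Nat.not_odd_iff_even, Nat.even_iff] at hodd
        omega, rfl⟩,
      ⟨⟨bOdd r n π, by
        intro i hi
        simp only [bOdd, Multiset.mem_map] at hi
        obtain ⟨j, hj, rfl⟩ := hi
        obtain ⟨hmem, hodd⟩ := Multiset.mem_filter.mp hj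
        rw [(odd_decomp (hπ j hmem hodd)).1]
        omega, rfl⟩, by
        intro i hi
        simp only [bOdd, Multiset.mem_map] at hi
        obtain ⟨j, hj, rfl⟩ := hi
        obtain ⟨hmem, hodd⟩ := Multiset.mem_filter.mp hj
        rw [(odd_decomp (hπ j hmem hodd)).1, Nat.even_iff]
        omega⟩⟩⟩

noncomputable def fromB (x : Σ x : T r n, x.1.1.Partition × Osub x.1.2) :
    {π : n.Partition // condB r n π} :=
  ⟨⟨x.2.1.parts.map (fun i => 2 * i) + x.2.2.1.parts.map (fun i => (2 * r + 1) * i), by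
      intro i hi
      rw [Multiset.mem_add] at hi
      rcases hi with hi | hi <;> rw [Multiset.mem_map] at hi <;>
        obtain ⟨j, hj, rfl⟩ := hi
      · have := x.2.1.parts_pos hj
        omega
      · have := x.2.2.1.parts_pos hj
        positivity, by
      rw [Multiset.sum_add, mul_sum_ms, mul_sum_ms, x.2.1.parts_sum, x.2.2.1.parts_sum]
      exact x.1.2⟩, by
    intro i hi hodd
    rw [Multiset.mem_add] at hi
    rcases hi with hi | hi <;> rw [Multiset.mem_map] at hi <;> obtain ⟨j, hj, rfl⟩ := hi
    · rw [Nat.odd_iff] at hodd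
      omega
    · have hj2 := x.2.2.2 j hj
      rw [Nat.not_even_iff_odd, Nat.odd_iff] at hj2
      have : (2 * r + 1) * j = (4 * r + 2) * (j / 2) + (2 * r + 1) := by
        have := Nat.div_add_mod j 2
        nlinarith [this]
      rw [this, Nat.mul_add_mod]
      exact Nat.mod_eq_of_lt (by omega)⟩

noncomputable def equivB : {π : n.Partition // condB r n π} ≃
    Σ x : T r n, x.1.1.Partition × Osub x.1.2 where
  toFun := fun π => toB r n π.1 π.2
  invFun := fromB r n
  left_inv := by
    rintro ⟨π, hπ⟩
    apply Subtype.ext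
    apply Nat.Partition.ext
    show (bEven n π).map (fun i => 2 * i) + (bOdd r n π).map (fun i => (2 * r + 1) * i)
      = π.parts
    rw [bEven_spec, bOdd_spec r n π hπ, add_comm, Multiset.filter_add_not]
  right_inv := by
    rintro ⟨⟨⟨w, m⟩, hx⟩, P, Q⟩
    dsimp only
    apply sigma_ext (pr := fun m π => ∀ i ∈ π.parts, ¬Even i)
    · show ((P.parts.map (fun i => 2 * i) + Q.1.parts.map (fun i => (2 * r + 1) * i)).filter
        (fun i => ¬Odd i)).map (· / 2) = P.parts
      rw [Multiset.filter_add]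
      rw [Multiset.filter_eq_self.mpr (fun i hi => by
        rw [Multiset.mem_map] at hi
        obtain ⟨j, _, rfl⟩ := hi
        rw [Nat.not_odd_iff_even, Nat.even_iff]
        omega)]
      rw [Multiset.filter_eq_nil.mpr (fun i hi => by
        rw [Multiset.mem_map] at hi
        obtain ⟨j, hj, rfl⟩ := hi
        have hj2 := Q.2 j hj
        rw [Nat.not_even_iff_odd, Nat.odd_iff] at hj2
        rw [Decidable.not_not]
        exact Odd.mul ⟨r, by ring⟩ (Nat.odd_iff.mpr hj2))]
      rw [add_zero]
      exact map_div_mul 2 (by omega) P.parts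
    · show ((P.parts.map (fun i => 2 * i) + Q.1.parts.map (fun i => (2 * r + 1) * i)).filter
        (fun i => Odd i)).map (· / (2 * r + 1)) = Q.1.parts
      rw [Multiset.filter_add]
      rw [Multiset.filter_eq_nil.mpr (fun i hi => by
        rw [Multiset.mem_map] at hi
        obtain ⟨j, _, rfl⟩ := hi
        rw [Nat.odd_iff]
        omega)]
      rw [Multiset.filter_eq_self.mpr (fun i hi => by
        rw [Multiset.mem_map] at hi
        obtain ⟨j, hj, rfl⟩ := hi
        have hj2 := Q.2 j hj
        rw [Nat.not_even_iff_odd, Nat.odd_iff] at hj2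
        exact Odd.mul ⟨r, by ring⟩ (Nat.odd_iff.mpr hj2))]
      rw [zero_add]
      exact map_div_mul (2 * r + 1) (by omega) Q.1.parts

end EquivB


/-! ### The A-side equivalence -/

section EquivA

variable (r n : ℕ)

def condA (π : n.Partition) : Prop :=
  ∀ i ∈ π.parts, Odd (π.parts.count i) → 2 * r + 1 ≤ π.parts.count i

noncomputable def aFun (r : ℕ) (s : Multiset ℕ) : ℕ →₀ ℕ :=
  Finsupp.mapRange (fun c => if Odd c then c / 2 - r else c / 2)
    (by norm_num [Nat.odd_iff]) s.toFinsupp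

lemma aFun_apply (s : Multiset ℕ) (k : ℕ) :
    aFun r s k = if Odd (s.count k) then s.count k / 2 - r else s.count k / 2 := by
  simp only [aFun, Finsupp.mapRange_apply, Multiset.toFinsupp_apply]
  congr

def sFin (s : Multiset ℕ) : Finset ℕ := s.toFinset.filter (fun k => Odd (s.count k))

lemma star (s : Multiset ℕ) (hA : ∀ k, Odd (s.count k) → 2 * r + 1 ≤ s.count k) :
    (aFun r s).toMultiset + (aFun r s).toMultiset + (2 * r + 1) • (sFin s).val = s := by
  ext k
  simp only [Multiset.count_add, Multiset.count_nsmul, Finsupp.count_toMultiset, aFun_apply]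
  by_cases hodd : Odd (s.count k)
  · have hk : k ∈ sFin s := Finset.mem_filter.mpr
      ⟨Multiset.mem_toFinset.mpr (Multiset.count_pos.mp (by
        have := Nat.odd_iff.mp hodd; omega)), hodd⟩
    rw [Multiset.count_eq_one_of_mem (sFin s).nodup (Finset.mem_val.mpr hk)]
    have h1 := hA k hodd
    have h2 := Nat.odd_iff.mp hodd
    simp only [if_pos hodd]
    omega
  · rw [Multiset.count_eq_zero_of_notMem (a := k) (s := (sFin s).val)
      (fun hk => hodd (Finset.mem_filter.mp (Finset.mem_val.mp hk)).2)]
    have h2 := Nat.not_odd_iff_even.mp hodd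
    rw [Nat.even_iff] at h2
    simp only [if_neg hodd]
    omega

lemma hA_of_condA (π : n.Partition) (hπ : condA r n π) :
    ∀ k, Odd (π.parts.count k) → 2 * r + 1 ≤ π.parts.count k := by
  intro k h
  refine hπ k (Multiset.count_pos.mp ?_) h
  have := Nat.odd_iff.mp h; omega

lemma a_index (π : n.Partition) (hπ : condA r n π) :
    2 * (aFun r π.parts).toMultiset.sum + (2 * r + 1) * (sFin π.parts).val.sum = n := by
  have h := congrArg Multiset.sum (star r π.parts (hA_of_condA r n π hπ))
  rw [Multiset.sum_add, Multiset.sum_add, Multiset.sum_nsmul, smul_eq_mul, π.parts_sum] at h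
  omega

noncomputable def toA (π : n.Partition) (hπ : condA r n π) :
    Σ x : T r n, x.1.1.Partition × Dsub x.1.2 :=
  ⟨⟨((aFun r π.parts).toMultiset.sum, (sFin π.parts).val.sum), a_index r n π hπ⟩,
    ⟨⟨(aFun r π.parts).toMultiset, by
        intro i hi
        rw [Finsupp.mem_toMultiset, Finsupp.mem_support_iff, aFun_apply] at hi
        have hcnt : π.parts.count i ≠ 0 := by
          intro h0; rw [h0] at hi; simp [Nat.odd_iff] at hi
        exact π.parts_pos (Multiset.count_pos.mp (by omega)), rfl⟩,
      ⟨⟨(sFin π.parts).val, by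
        intro i hi
        have := (Finset.mem_filter.mp (Finset.mem_val.mp hi)).1
        exact π.parts_pos (Multiset.mem_toFinset.mp this), rfl⟩,
        (sFin π.parts).nodup⟩⟩⟩

noncomputable def fromA (x : Σ x : T r n, x.1.1.Partition × Dsub x.1.2) :
    {π : n.Partition // condA r n π} :=
  ⟨⟨x.2.1.parts + x.2.1.parts + (2 * r + 1) • x.2.2.1.parts, by
      intro i hi
      rw [Multiset.mem_add, Multiset.mem_add] at hi
      rcases hi with (hi | hi) | hi
      · exact x.2.1.parts_pos hi
      · exact x.2.1.parts_pos hi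
      · exact x.2.2.1.parts_pos (Multiset.mem_of_mem_nsmul hi), by
      rw [Multiset.sum_add, Multiset.sum_add, Multiset.sum_nsmul, smul_eq_mul,
        x.2.1.parts_sum, x.2.2.1.parts_sum]
      have h := x.1.2
      set t := (2 * r + 1) * x.1.1.2
      omega⟩, by
    intro i _ hodd
    rw [Nat.odd_iff] at hodd
    simp only [Multiset.count_add, Multiset.count_nsmul] at hodd ⊢
    have hc2 : Multiset.count i x.2.2.1.parts ≤ 1 :=
      Multiset.nodup_iff_count_le_one.mp x.2.2.2 i
    rcases Nat.le_one_iff_eq_zero_or_eq_one.mp hc2 with h | h <;>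
      rw [h] at hodd ⊢ <;> simp only [mul_zero, mul_one] at hodd ⊢ <;> omega⟩

noncomputable def equivA : {π : n.Partition // condA r n π} ≃
    Σ x : T r n, x.1.1.Partition × Dsub x.1.2 where
  toFun := fun π => toA r n π.1 π.2
  invFun := fromA r n
  left_inv := by
    rintro ⟨π, hπ⟩
    apply Subtype.ext
    apply Nat.Partition.ext
    exact star r π.parts (hA_of_condA r n π hπ)
  right_inv := by
    rintro ⟨⟨⟨w, m⟩, hx⟩, P, Q⟩
    dsimp only
    apply sigma_ext (pr := fun m π => π.parts.Nodup)
    · show (aFun r (P.parts + P.parts + (2 * r + 1) • Q.1.parts)).toMultiset = P.parts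
      ext k
      rw [Finsupp.count_toMultiset, aFun_apply]
      simp only [Multiset.count_add, Multiset.count_nsmul]
      have hc2 : Multiset.count k Q.1.parts ≤ 1 :=
        Multiset.nodup_iff_count_le_one.mp Q.2 k
      rcases Nat.le_one_iff_eq_zero_or_eq_one.mp hc2 with h | h <;>
        rw [h] <;> simp only [mul_zero, mul_one, add_zero]
      · rw [if_neg (by rw [Nat.odd_iff]; omega)]
        omega
      · rw [if_pos ⟨Multiset.count k P.parts + r, by ring⟩]
        omega
    · show (sFin (P.parts + P.parts + (2 * r + 1) • Q.1.parts)).val = Q.1.parts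
      have hQ : sFin (P.parts + P.parts + (2 * r + 1) • Q.1.parts) = Q.1.parts.toFinset := by
        ext k
        simp only [sFin, Finset.mem_filter, Multiset.mem_toFinset, ← Multiset.count_pos,
          Multiset.count_add, Multiset.count_nsmul, Nat.odd_iff]
        have hc2 : Multiset.count k Q.1.parts ≤ 1 :=
          Multiset.nodup_iff_count_le_one.mp Q.2 k
        rcases Nat.le_one_iff_eq_zero_or_eq_one.mp hc2 with h | h <;>
          rw [h] <;> simp only [mul_zero, mul_one, add_zero] <;> constructor <;> intro h' <;> omega
      rw [hQ, Multiset.toFinset_val, Multiset.dedup_eq_self.mpr Q.2]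

end EquivA

end AndrewsMacMahonAux

open AndrewsMacMahonAux in
/-- **Andrews' generalization of MacMahon's theorem.** For `r ≥ 0`, the number of
partitions of `n` in which every part whose multiplicity is odd has multiplicity at least
`2r + 1` equals the number of partitions of `n` in which every odd part is congruent to
`2r + 1` modulo `4r + 2`. -/
theorem andrews_macmahon (r : ℕ) (n : ℕ) :
    Nat.card {π : n.Partition //
      ∀ i ∈ π.parts, Odd (π.parts.count i) → 2 * r + 1 ≤ π.parts.count i} =
    Nat.card {π : n.Partition //
      ∀ i ∈ π.parts, Odd i → i % (4 * r + 2) = 2 * r + 1} := by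
  calc Nat.card {π : n.Partition // condA r n π}
      = Nat.card (Σ x : T r n, x.1.1.Partition × Dsub x.1.2) := Nat.card_congr (equivA r n)
    _ = Nat.card (Σ x : T r n, x.1.1.Partition × Osub x.1.2) :=
        Nat.card_congr (Equiv.sigmaCongrRight fun x =>
          Equiv.prodCongr (Equiv.refl _) (eulerEquiv x.1.2))
    _ = Nat.card {π : n.Partition // condB r n π} := (Nat.card_congr (equivB r n)).symm
end

section
/- Let m > 1 and r ≥ 0 be integers. For every natural number n, the number of partitions of n in which every part with even multiplicity has multiplicity less than 2m, and every part with odd multiplicity has multiplicity at least 2r + 1 and at most 2(m + r) − 1, equals the number of partitions of n in which every part is either odd and congruent to 2r + 1 modulo 4r + 2, or even and not congruent to 0 modulo 2m. -/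
namespace SubbaraoAux

open Finset Multiset Nat

/-- `k`-th digit of `e` in base `b`. -/
def dig (b e k : ℕ) : ℕ := e / b ^ k % b

lemma dig_lt {b : ℕ} (hb : 1 < b) (e k : ℕ) : dig b e k < b :=
  Nat.mod_lt _ (by omega)

lemma dig_of_lt {b e k : ℕ} (h : e < b ^ k) : dig b e k = 0 := by
  simp [dig, Nat.div_eq_of_lt h]

lemma self_lt_pow {b e : ℕ} (hb : 1 < b) : e < b ^ e :=
  Nat.lt_pow_self hb

lemma dig_of_le {b e k : ℕ} (hb : 1 < b) (h : e ≤ k) : dig b e k = 0 :=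
  dig_of_lt (lt_of_lt_of_le (self_lt_pow hb) (Nat.pow_le_pow_right (by omega) h))

lemma sum_dig {b : ℕ} (hb : 1 < b) :
    ∀ (K e : ℕ), e < b ^ K → ∑ k ∈ range K, dig b e k * b ^ k = e := by
  intro K
  induction K with
  | zero => intro e he; simp at he; simp [he]
  | succ K ih =>
    intro e he
    rw [Finset.sum_range_succ' (fun k => dig b e k * b ^ k)]
    have h2 : e / b < b ^ K := by
      rw [Nat.div_lt_iff_lt_mul (by omega)]
      calc e < b ^ (K + 1) := he
      _ = b ^ K * b := by ring
    calc (∑ k ∈ range K, dig b e (k + 1) * b ^ (k + 1)) + dig b e 0 * b ^ 0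
        = (∑ k ∈ range K, dig b (e / b) k * b ^ k) * b + e % b := by
          rw [Finset.sum_mul]
          congr 1
          · apply Finset.sum_congr rfl
            intro k _
            have h1 : dig b e (k + 1) = dig b (e / b) k := by
              simp [dig, pow_succ, Nat.div_div_eq_div_mul, mul_comm]
            rw [h1, pow_succ]; ring
          · simp [dig]
      _ = e / b * b + e % b := by rw [ih _ h2]
      _ = e := Nat.div_add_mod' e b

lemma sum_digits_lt {b K : ℕ} (hb : 1 < b) (a : ℕ → ℕ) (ha : ∀ k, a k < b) :
    ∑ k ∈ range K, a k * b ^ k < b ^ K := by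
  induction K with
  | zero => simp
  | succ K ih =>
    rw [Finset.sum_range_succ]
    calc (∑ k ∈ range K, a k * b ^ k) + a K * b ^ K
        < b ^ K + a K * b ^ K := by omega
      _ = (a K + 1) * b ^ K := by ring
      _ ≤ b * b ^ K := Nat.mul_le_mul_right _ (ha K)
      _ = b ^ (K + 1) := by ring

lemma dig_add_mul {b : ℕ} (hb : 1 < b) (e c K k : ℕ) (hk : k < K) :
    dig b (e + c * b ^ K) k = dig b e k := by
  unfold dig
  have : c * b ^ K = (c * b ^ (K - k - 1) * b) * b ^ k := by
    rw [mul_assoc, mul_assoc, ← pow_succ', ← pow_add]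
    congr 2
    omega
  rw [this, Nat.add_mul_div_right _ _ (Nat.pow_pos (by omega)),
    Nat.add_mul_mod_self_right]

lemma dig_sum {b : ℕ} (hb : 1 < b) (a : ℕ → ℕ) (ha : ∀ k, a k < b) (K k' : ℕ) :
    dig b (∑ k ∈ range K, a k * b ^ k) k' = if k' < K then a k' else 0 := by
  induction K with
  | zero => simp [dig]
  | succ K ih =>
    rw [Finset.sum_range_succ]
    by_cases h : k' < K
    · rw [dig_add_mul hb _ _ _ _ h, ih, if_pos h, if_pos (by omega)]
    · by_cases h2 : k' = K
      · subst h2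
        rw [if_pos (by omega)]
        unfold dig
        rw [Nat.add_mul_div_right _ _ (Nat.pow_pos (by omega)),
          Nat.div_eq_of_lt (sum_digits_lt hb a ha), zero_add, Nat.mod_eq_of_lt (ha _)]
      · rw [if_neg (by omega)]
        exact dig_of_lt (lt_of_lt_of_le
          (Finset.sum_range_succ (fun k => a k * b ^ k) K ▸ sum_digits_lt hb a ha)
          (Nat.pow_le_pow_right (by omega) (by omega)))


/-! ### `b`-adic valuation and unit part -/

/-- largest `k` with `b ^ k ∣ i`. -/
def pv (b i : ℕ) : ℕ := Nat.maxPowDiv b i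

/-- the part of `i` coprime-ish to `b`: `i / b ^ pv b i`. -/
def pu (b i : ℕ) : ℕ := i / b ^ pv b i

lemma pu_mul_pow {b i : ℕ} (hi : 0 < i) : pu b i * b ^ pv b i = i :=
  Nat.div_mul_cancel (Nat.maxPowDiv.pow_dvd (p := b) (n := i))

lemma pu_pos {b i : ℕ} (hb : 1 < b) (hi : 0 < i) : 0 < pu b i := by
  have := pu_mul_pow (b := b) hi
  by_contra h
  simp only [Nat.not_lt, Nat.le_zero] at h
  rw [h, zero_mul] at this
  omega

lemma not_dvd_pu {b i : ℕ} (hb : 1 < b) (hi : 0 < i) : ¬ b ∣ pu b i := by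
  intro ⟨c, hc⟩
  have h1 : b ^ (pv b i + 1) ∣ i := by
    refine ⟨c, ?_⟩
    conv_lhs => rw [← pu_mul_pow (b := b) hi]
    rw [hc, pow_succ]
    ring
  have : pv b i + 1 ≤ pv b i := (Nat.pow_dvd_iff_le_padicValNat (p := b) (n := i) (by omega) (by omega)).mp h1
  unfold pv at *
  omega

lemma pv_eq_zero {b j : ℕ} (hj : ¬ b ∣ j) : pv b j = 0 := by
  by_contra h
  apply hj
  have h1 : b ^ 1 ∣ b ^ pv b j := Nat.pow_dvd_pow _ (by omega)
  simpa using h1.trans (Nat.maxPowDiv.pow_dvd (p := b) (n := j))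

lemma pv_mul_pow {b j k : ℕ} (hb : 1 < b) (hj : ¬ b ∣ j) : pv b (j * b ^ k) = k := by
  have hj0 : 0 < j := by
    rcases Nat.eq_zero_or_pos j with h | h
    · exact absurd (h ▸ dvd_zero b) hj
    · exact h
  unfold pv
  rw [mul_comm, show Nat.maxPowDiv b (b ^ k * j) = padicValNat b (b ^ k * j) from rfl,
    padicValNat_base_pow_mul hb (by omega)]
  rw [show padicValNat b j = pv b j from rfl, pv_eq_zero hj, zero_add]

lemma pu_mul_pow_eq {b j k : ℕ} (hb : 1 < b) (hj : ¬ b ∣ j) : pu b (j * b ^ k) = j := by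
  have hj0 : 0 < j := by
    rcases Nat.eq_zero_or_pos j with h | h
    · exact absurd (h ▸ dvd_zero b) hj
    · exact h
  unfold pu
  rw [pv_mul_pow hb hj, Nat.mul_div_cancel _ (Nat.pow_pos (by omega))]

/-- uniqueness of the decomposition `i = j * b ^ k`, `¬ b ∣ j`. -/
lemma decomp_unique {b j k : ℕ} (hb : 1 < b) (hj : ¬ b ∣ j) {i : ℕ}
    (h : i = j * b ^ k) : pu b i = j ∧ pv b i = k := by
  subst h
  exact ⟨pu_mul_pow_eq hb hj, pv_mul_pow hb hj⟩


/-! ### Glaisher spread / unspread -/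

/-- Glaisher map: part `i` with multiplicity `c` becomes `c * b ^ pv b i` copies of `pu b i`. -/
def spread (b : ℕ) (Q : Multiset ℕ) : Multiset ℕ :=
  Q.dedup.bind fun i => Multiset.replicate (Q.count i * b ^ pv b i) (pu b i)

/-- Inverse Glaisher map: part `j` with multiplicity `d` becomes, for each `k`,
`dig b d k` copies of `j * b ^ k`. -/
def unspread (b : ℕ) (D : Multiset ℕ) : Multiset ℕ :=
  D.dedup.bind fun j =>
    (Multiset.range (D.count j + 1)).bind fun k =>
      Multiset.replicate (dig b (D.count j) k) (j * b ^ k)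

lemma dedup_map_sum (Q : Multiset ℕ) (g : ℕ → ℕ) :
    (Q.dedup.map g).sum = ∑ i ∈ Q.toFinset, g i := rfl

lemma mem_spread {b : ℕ} {Q : Multiset ℕ} {t : ℕ} (ht : t ∈ spread b Q) :
    ∃ i ∈ Q, t = pu b i := by
  rw [spread, Multiset.mem_bind] at ht
  obtain ⟨i, hi, hti⟩ := ht
  exact ⟨i, Multiset.mem_dedup.mp hi, Multiset.eq_of_mem_replicate hti⟩

lemma count_spread {b : ℕ} (hb : 1 < b) {Q : Multiset ℕ} (h0 : 0 ∉ Q) {j : ℕ}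
    (hj : ¬ b ∣ j) {K : ℕ} (hK : ∀ i ∈ Q, i < j * b ^ K) :
    (spread b Q).count j = ∑ k ∈ Finset.range K, Q.count (j * b ^ k) * b ^ k := by
  have hj0 : 0 < j := by
    rcases Nat.eq_zero_or_pos j with h | h
    · exact absurd (h ▸ dvd_zero b) hj
    · exact h
  rw [spread, Multiset.count_bind, dedup_map_sum]
  have step1 : ∀ i ∈ Q.toFinset,
      Multiset.count j (Multiset.replicate (Q.count i * b ^ pv b i) (pu b i)) =
      if pu b i = j then Q.count i * b ^ pv b i else 0 := by
    intro i _
    rw [Multiset.count_replicate]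
  rw [Finset.sum_congr rfl step1, ← Finset.sum_filter]
  rw [show (∑ k ∈ Finset.range K, Q.count (j * b ^ k) * b ^ k) =
      ∑ k ∈ (Finset.range K).filter (fun k => j * b ^ k ∈ Q), Q.count (j * b ^ k) * b ^ k from
    (Finset.sum_filter_of_ne (fun k _ hne => by
      by_contra hmem
      rw [Multiset.count_eq_zero_of_notMem hmem] at hne
      simp at hne)).symm]
  apply Finset.sum_nbij' (i := fun x => pv b x) (j := fun k => j * b ^ k)
  · intro x hx
    simp only [Finset.mem_filter, Multiset.mem_toFinset] at hx ⊢
    obtain ⟨hxQ, hpu⟩ := hx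
    have hx0 : 0 < x := Nat.pos_of_ne_zero (fun h => h0 (h ▸ hxQ))
    have hxe : j * b ^ pv b x = x := by rw [← hpu]; exact pu_mul_pow hx0
    constructor
    · rw [Finset.mem_range]
      have := hK x hxQ
      rw [← hxe] at this
      have := Nat.lt_of_mul_lt_mul_left this
      exact (Nat.pow_lt_pow_iff_right hb).mp this
    · rw [hxe]; exact hxQ
  · intro k hk
    simp only [Finset.mem_filter, Multiset.mem_toFinset] at hk ⊢
    exact ⟨hk.2, pu_mul_pow_eq hb hj⟩
  · intro x hx
    simp only [Finset.mem_filter, Multiset.mem_toFinset] at hx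
    obtain ⟨hxQ, hpu⟩ := hx
    have hx0 : 0 < x := Nat.pos_of_ne_zero (fun h => h0 (h ▸ hxQ))
    rw [← hpu]; exact pu_mul_pow hx0
  · intro k _
    exact pv_mul_pow hb hj
  · intro x hx
    simp only [Finset.mem_filter, Multiset.mem_toFinset] at hx
    obtain ⟨hxQ, hpu⟩ := hx
    have hx0 : 0 < x := Nat.pos_of_ne_zero (fun h => h0 (h ▸ hxQ))
    have hxe : j * b ^ pv b x = x := by rw [← hpu]; exact pu_mul_pow hx0
    rw [hxe]


lemma spread_sum {b : ℕ} {Q : Multiset ℕ} (h0 : 0 ∉ Q) : (spread b Q).sum = Q.sum := by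
  rw [spread, Multiset.sum_bind, dedup_map_sum]
  have : ∀ i ∈ Q.toFinset,
      (Multiset.replicate (Q.count i * b ^ pv b i) (pu b i)).sum = Q.count i * i := by
    intro i hi
    rw [Multiset.sum_replicate, smul_eq_mul, mul_assoc, mul_comm (b ^ pv b i),
      pu_mul_pow (Nat.pos_of_ne_zero (fun h => h0 (h ▸ Multiset.mem_toFinset.mp hi)))]
  rw [Finset.sum_congr rfl this]
  conv_rhs => rw [Finset.sum_multiset_count Q]
  simp [smul_eq_mul]

lemma mem_unspread {b : ℕ} {D : Multiset ℕ} {t : ℕ} (ht : t ∈ unspread b D) :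
    ∃ j ∈ D, ∃ k, t = j * b ^ k := by
  rw [unspread, Multiset.mem_bind] at ht
  obtain ⟨j, hj, ht⟩ := ht
  rw [Multiset.mem_bind] at ht
  obtain ⟨k, _, ht⟩ := ht
  exact ⟨j, Multiset.mem_dedup.mp hj, k, Multiset.eq_of_mem_replicate ht⟩

lemma count_unspread {b : ℕ} (hb : 1 < b) {D : Multiset ℕ}
    (hD : ∀ j ∈ D, 0 < j ∧ ¬ b ∣ j) {t : ℕ} (ht : 0 < t) :
    (unspread b D).count t = dig b (D.count (pu b t)) (pv b t) := by
  rw [unspread, Multiset.count_bind, dedup_map_sum]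
  have step : ∀ j ∈ D.toFinset,
      Multiset.count t ((Multiset.range (D.count j + 1)).bind fun k =>
        Multiset.replicate (dig b (D.count j) k) (j * b ^ k)) =
      if j = pu b t then dig b (D.count j) (pv b t) else 0 := by
    intro j hj
    obtain ⟨hj0, hjnd⟩ := hD j (Multiset.mem_toFinset.mp hj)
    rw [Multiset.count_bind]
    have : Multiset.range (D.count j + 1) = (Finset.range (D.count j + 1)).val := by
      rw [Finset.range_val]
    rw [this, ← Finset.sum]
    by_cases hju : j = pu b t
    · subst hju
      rw [if_pos rfl]
      have hcond : ∀ k, (pu b t * b ^ k = t) ↔ k = pv b t := by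
        intro k
        constructor
        · intro h
          exact ((decomp_unique hb hjnd h.symm).2).symm
        · rintro rfl
          exact pu_mul_pow ht
      have : ∀ k ∈ Finset.range (D.count (pu b t) + 1),
          Multiset.count t (Multiset.replicate (dig b (D.count (pu b t)) k) (pu b t * b ^ k)) =
          if k = pv b t then dig b (D.count (pu b t)) k else 0 := by
        intro k _
        rw [Multiset.count_replicate]
        simp only [hcond k]
      rw [Finset.sum_congr rfl this, Finset.sum_ite_eq' (Finset.range (D.count (pu b t) + 1))]
      by_cases hv : pv b t ∈ Finset.range (D.count (pu b t) + 1)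
      · rw [if_pos hv]
      · rw [if_neg hv]
        rw [Finset.mem_range] at hv
        exact (dig_of_le hb (by omega)).symm
    · rw [if_neg hju]
      apply Finset.sum_eq_zero
      intro k _
      rw [Multiset.count_replicate, if_neg]
      intro h
      exact hju ((decomp_unique hb hjnd h.symm).1).symm
  rw [Finset.sum_congr rfl step, Finset.sum_ite_eq' D.toFinset]
  by_cases hu : pu b t ∈ D.toFinset
  · rw [if_pos hu]
  · rw [if_neg hu]
    rw [Multiset.mem_toFinset] at hu
    rw [Multiset.count_eq_zero_of_notMem hu]
    simp [dig]


lemma unspread_sum {b : ℕ} (hb : 1 < b) {D : Multiset ℕ} : (unspread b D).sum = D.sum := by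
  rw [unspread, Multiset.sum_bind, dedup_map_sum]
  have step : ∀ j ∈ D.toFinset,
      ((Multiset.range (D.count j + 1)).bind fun k =>
        Multiset.replicate (dig b (D.count j) k) (j * b ^ k)).sum = D.count j * j := by
    intro j hj
    rw [Multiset.sum_bind]
    have : Multiset.range (D.count j + 1) = (Finset.range (D.count j + 1)).val := by
      rw [Finset.range_val]
    rw [this, ← Finset.sum]
    have : ∀ k ∈ Finset.range (D.count j + 1),
        (Multiset.replicate (dig b (D.count j) k) (j * b ^ k)).sum =
        j * (dig b (D.count j) k * b ^ k) := by
      intro k _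
      rw [Multiset.sum_replicate, smul_eq_mul]
      ring
    rw [Finset.sum_congr rfl this, ← Finset.mul_sum,
      sum_dig hb _ _ (lt_of_lt_of_le (self_lt_pow hb)
        (Nat.pow_le_pow_right (by omega) (by omega)))]
    ring
  rw [Finset.sum_congr rfl step]
  conv_rhs => rw [Finset.sum_multiset_count D]
  simp [smul_eq_mul]

lemma count_unspread_lt {b : ℕ} (hb : 1 < b) {D : Multiset ℕ}
    (hD : ∀ j ∈ D, 0 < j ∧ ¬ b ∣ j) (t : ℕ) : (unspread b D).count t < b := by
  rcases Nat.eq_zero_or_pos t with rfl | ht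
  · rw [Multiset.count_eq_zero_of_notMem]
    · omega
    intro h0
    obtain ⟨j, hj, k, hk⟩ := mem_unspread h0
    have := (hD j hj).1
    have : 0 < b ^ k := Nat.pow_pos (by omega)
    nlinarith
  · rw [count_unspread hb hD ht]
    exact dig_lt hb _ _

lemma zero_not_mem_unspread {b : ℕ} (hb : 1 < b) {D : Multiset ℕ}
    (hD : ∀ j ∈ D, 0 < j ∧ ¬ b ∣ j) : (0 : ℕ) ∉ unspread b D := by
  intro h0
  obtain ⟨j, hj, k, hk⟩ := mem_unspread h0
  have := (hD j hj).1
  have : 0 < b ^ k := Nat.pow_pos (by omega)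
  nlinarith

lemma unspread_spread {b : ℕ} (hb : 1 < b) {Q : Multiset ℕ} (h0 : 0 ∉ Q)
    (hc : ∀ i, Q.count i < b) : unspread b (spread b Q) = Q := by
  have hSQ : ∀ j ∈ spread b Q, 0 < j ∧ ¬ b ∣ j := by
    intro j hj
    obtain ⟨i, hi, rfl⟩ := mem_spread hj
    have hi0 : 0 < i := Nat.pos_of_ne_zero (fun h => h0 (h ▸ hi))
    exact ⟨pu_pos hb hi0, not_dvd_pu hb hi0⟩
  ext t
  rcases Nat.eq_zero_or_pos t with rfl | ht
  · rw [Multiset.count_eq_zero_of_notMem (zero_not_mem_unspread hb hSQ),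
      Multiset.count_eq_zero_of_notMem h0]
  · rw [count_unspread hb hSQ ht]
    set v := pv b t with hv
    set j := pu b t with hj
    have hjt : j * b ^ v = t := pu_mul_pow ht
    have hjnd : ¬ b ∣ j := not_dvd_pu hb ht
    set K := Q.sum + v + 1 with hK
    have hKbig : ∀ i ∈ Q, i < j * b ^ K := by
      intro i hi
      have h1 : i ≤ Q.sum := Multiset.le_sum_of_mem hi
      have h2 : K < 2 ^ K := Nat.lt_two_pow_self
      have h3 : (2:ℕ) ^ K ≤ b ^ K := Nat.pow_le_pow_left (by omega) K
      have h4 : b ^ K ≤ j * b ^ K := Nat.le_mul_of_pos_left _ (pu_pos hb ht)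
      omega
    rw [count_spread hb h0 hjnd hKbig,
      dig_sum hb _ (fun k => hc _) K v, if_pos (by omega), hjt]

lemma spread_unspread {b : ℕ} (hb : 1 < b) {D : Multiset ℕ}
    (hD : ∀ j ∈ D, 0 < j ∧ ¬ b ∣ j) : spread b (unspread b D) = D := by
  have h0 : (0 : ℕ) ∉ unspread b D := zero_not_mem_unspread hb hD
  ext t
  by_cases htd : 0 < t ∧ ¬ b ∣ t
  · obtain ⟨ht, htnd⟩ := htd
    set K := (unspread b D).sum + D.count t + 1 with hK
    have hKbig : ∀ i ∈ unspread b D, i < t * b ^ K := by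
      intro i hi
      have h1 : i ≤ (unspread b D).sum := Multiset.le_sum_of_mem hi
      have h2 : K < 2 ^ K := Nat.lt_two_pow_self
      have h3 : (2:ℕ) ^ K ≤ b ^ K := Nat.pow_le_pow_left (by omega) K
      have h4 : b ^ K ≤ t * b ^ K := Nat.le_mul_of_pos_left _ ht
      omega
    rw [count_spread hb h0 htnd hKbig]
    have step : ∀ k ∈ Finset.range K,
        (unspread b D).count (t * b ^ k) * b ^ k = dig b (D.count t) k * b ^ k := by
      intro k _
      have htk : 0 < t * b ^ k := Nat.mul_pos ht (Nat.pow_pos (by omega))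
      rw [count_unspread hb hD htk, (decomp_unique hb htnd rfl).1,
        (decomp_unique hb htnd rfl).2]
    rw [Finset.sum_congr rfl step, sum_dig hb]
    have h2 : K < 2 ^ K := Nat.lt_two_pow_self
    have h3 : (2:ℕ) ^ K ≤ b ^ K := Nat.pow_le_pow_left (by omega) K
    omega
  · have hnd : t ∉ D := fun hmem => htd ⟨(hD t hmem).1, (hD t hmem).2⟩
    rw [Multiset.count_eq_zero_of_notMem hnd, Multiset.count_eq_zero_of_notMem]
    intro hmem
    obtain ⟨i, hi, rfl⟩ := mem_spread hmem
    have hi0 : 0 < i := Nat.pos_of_ne_zero (fun h => h0 (h ▸ hi))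
    exact htd ⟨pu_pos hb hi0, not_dvd_pu hb hi0⟩


/-! ### Main construction -/

/-- indicator multiset: parts with odd multiplicity. -/
def EQ (P : Multiset ℕ) : Multiset ℕ := P.dedup.filter (fun i => P.count i % 2 = 1)

/-- residual multiset: part `i` with multiplicity `(c - c % 2 * (2r+1))/2`. -/
def QQ (r : ℕ) (P : Multiset ℕ) : Multiset ℕ :=
  P.dedup.bind fun i => Multiset.replicate ((P.count i - P.count i % 2 * (2 * r + 1)) / 2) i

lemma count_EQ (P : Multiset ℕ) (i : ℕ) : (EQ P).count i = P.count i % 2 := by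
  rw [EQ, Multiset.count_filter]
  by_cases h : P.count i % 2 = 1
  · have hi : i ∈ P := by rw [← Multiset.count_pos]; omega
    rw [if_pos h, Multiset.count_dedup, if_pos hi, h]
  · rw [if_neg h]; omega

lemma count_QQ (r : ℕ) (P : Multiset ℕ) (i : ℕ) :
    (QQ r P).count i = (P.count i - P.count i % 2 * (2 * r + 1)) / 2 := by
  rw [QQ, Multiset.count_bind, dedup_map_sum]
  have step : ∀ x ∈ P.toFinset,
      Multiset.count i (Multiset.replicate ((P.count x - P.count x % 2 * (2 * r + 1)) / 2) x) =
      if x = i then (P.count x - P.count x % 2 * (2 * r + 1)) / 2 else 0 := by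
    intro x _
    rw [Multiset.count_replicate]
  rw [Finset.sum_congr rfl step, Finset.sum_ite_eq' P.toFinset]
  by_cases hi : i ∈ P.toFinset
  · rw [if_pos hi]
  · rw [if_neg hi]
    rw [Multiset.mem_toFinset] at hi
    rw [Multiset.count_eq_zero_of_notMem hi]
    simp

lemma zero_not_mem_EQ {P : Multiset ℕ} (h0 : 0 ∉ P) : 0 ∉ EQ P := by
  intro h
  exact h0 (Multiset.mem_dedup.mp (Multiset.mem_of_mem_filter h))

lemma zero_not_mem_QQ {r : ℕ} {P : Multiset ℕ} (h0 : 0 ∉ P) : 0 ∉ QQ r P := by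
  intro h
  rw [QQ, Multiset.mem_bind] at h
  obtain ⟨j, hj, h⟩ := h
  exact h0 ((Multiset.eq_of_mem_replicate h) ▸ Multiset.mem_dedup.mp hj)

/-- decomposition identity. -/
lemma decompP {r : ℕ} {P : Multiset ℕ}
    (hA : ∀ i ∈ P, (P.count i % 2 = 1 → 2 * r + 1 ≤ P.count i)) :
    (2 * r + 1) • EQ P + 2 • QQ r P = P := by
  ext i
  rw [Multiset.count_add, Multiset.count_nsmul, Multiset.count_nsmul, count_EQ, count_QQ]
  by_cases hi : i ∈ P
  · have hbound := hA i hi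
    by_cases h2 : P.count i % 2 = 1
    · rw [h2]
      have := hbound h2
      omega
    · have h0 : P.count i % 2 = 0 := by omega
      rw [h0]
      omega
  · rw [Multiset.count_eq_zero_of_notMem hi]
    simp

/-- the forward map on multisets. -/
def fwdA (m r : ℕ) (P : Multiset ℕ) : Multiset ℕ :=
  ((spread 2 (EQ P)).map fun o => (2 * r + 1) * o) +
    ((spread m (QQ r P)).map fun t => 2 * t)

/-- the backward map on multisets. -/
def bwdB (m r : ℕ) (S : Multiset ℕ) : Multiset ℕ :=
  (2 * r + 1) • unspread 2 ((S.filter fun p => p % 2 = 1).map fun p => p / (2 * r + 1)) +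
    2 • unspread m ((S.filter fun p => p % 2 = 0).map fun p => p / 2)


lemma odd_part_eq {r p : ℕ} (hp : p % (4 * r + 2) = 2 * r + 1) :
    ∃ t, p = (2 * r + 1) * (2 * t + 1) := by
  refine ⟨p / (4 * r + 2), ?_⟩
  have := Nat.div_add_mod p (4 * r + 2)
  have h2 : p % (4 * r + 2) = 2 * r + 1 := hp
  nlinarith [Nat.div_add_mod p (4 * r + 2)]

lemma M1_parts {m r : ℕ} {P : Multiset ℕ} (h0 : 0 ∉ P) :
    ∀ p ∈ (spread 2 (EQ P)).map (fun o => (2 * r + 1) * o),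
      0 < p ∧ p % 2 = 1 ∧ p % (4 * r + 2) = 2 * r + 1 := by
  intro p hp
  rw [Multiset.mem_map] at hp
  obtain ⟨o, ho, rfl⟩ := hp
  obtain ⟨i, hi, rfl⟩ := mem_spread ho
  have hi0 : 0 < i := Nat.pos_of_ne_zero (fun h => zero_not_mem_EQ h0 (h ▸ hi))
  have hop : 0 < pu 2 i := pu_pos (by norm_num) hi0
  have hond : ¬ 2 ∣ pu 2 i := not_dvd_pu (by norm_num) hi0
  obtain ⟨t, ht⟩ : ∃ t, pu 2 i = 2 * t + 1 := ⟨pu 2 i / 2, by omega⟩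
  rw [ht]
  refine ⟨by positivity, ?_, ?_⟩
  · have : (2 * r + 1) * (2 * t + 1) = 2 * (2 * r * t + r + t) + 1 := by ring
    omega
  · have h1 : (2 * r + 1) * (2 * t + 1) = (2 * r + 1) + t * (4 * r + 2) := by ring
    rw [h1, Nat.add_mul_mod_self_right, Nat.mod_eq_of_lt (by omega)]

lemma M2_parts {m r : ℕ} (hm : 1 < m) {P : Multiset ℕ} (h0 : 0 ∉ P) :
    ∀ p ∈ (spread m (QQ r P)).map (fun t => 2 * t),
      0 < p ∧ p % 2 = 0 ∧ ¬ p % (2 * m) = 0 := by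
  intro p hp
  rw [Multiset.mem_map] at hp
  obtain ⟨t, ht, rfl⟩ := hp
  obtain ⟨i, hi, rfl⟩ := mem_spread ht
  have hi0 : 0 < i := Nat.pos_of_ne_zero (fun h => zero_not_mem_QQ h0 (h ▸ hi))
  have hop : 0 < pu m i := pu_pos hm hi0
  have hond : ¬ m ∣ pu m i := not_dvd_pu hm hi0
  refine ⟨by positivity, by omega, ?_⟩
  intro hmod
  apply hond
  have h1 : 2 * m ∣ 2 * pu m i := Nat.dvd_of_mod_eq_zero hmod
  obtain ⟨c, hc⟩ := h1
  rw [mul_assoc] at hc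
  exact ⟨c, Nat.eq_of_mul_eq_mul_left (by norm_num) hc⟩

lemma D1_parts {r m' : ℕ} {S : Multiset ℕ} (h0 : 0 ∉ S)
    (hB : ∀ p ∈ S, p % (4 * r + 2) = 2 * r + 1 ∨ (p % 2 = 0 ∧ ¬ p % (2 * m') = 0)) :
    ∀ j ∈ (S.filter fun p => p % 2 = 1).map (fun p => p / (2 * r + 1)),
      0 < j ∧ ¬ 2 ∣ j := by
  intro j hj
  rw [Multiset.mem_map] at hj
  obtain ⟨p, hp, rfl⟩ := hj
  rw [Multiset.mem_filter] at hp
  obtain ⟨hpS, hpodd⟩ := hp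
  have hmod : p % (4 * r + 2) = 2 * r + 1 := by
    rcases hB p hpS with h | h
    · exact h
    · omega
  obtain ⟨t, ht⟩ := odd_part_eq hmod
  rw [ht, Nat.mul_div_cancel_left _ (by omega)]
  omega

lemma D2_parts {m r : ℕ} {S : Multiset ℕ} (h0 : 0 ∉ S)
    (hB : ∀ p ∈ S, p % (4 * r + 2) = 2 * r + 1 ∨ (p % 2 = 0 ∧ ¬ p % (2 * m) = 0)) :
    ∀ j ∈ (S.filter fun p => p % 2 = 0).map (fun p => p / 2),
      0 < j ∧ ¬ m ∣ j := by
  intro j hj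
  rw [Multiset.mem_map] at hj
  obtain ⟨p, hp, rfl⟩ := hj
  rw [Multiset.mem_filter] at hp
  obtain ⟨hpS, hpeven⟩ := hp
  have hp0 : 0 < p := Nat.pos_of_ne_zero (fun h => h0 (h ▸ hpS))
  have hne : ¬ p % (2 * m) = 0 := by
    rcases hB p hpS with h | h
    · exfalso
      obtain ⟨t, ht⟩ := odd_part_eq h
      have : p = 2 * (2 * r * t + r + t) + 1 := by rw [ht]; ring
      omega
    · exact h.2
  constructor
  · omega
  · intro ⟨c, hc⟩
    apply hne
    have hp2 : p = 2 * (m * c) := by omega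
    rw [hp2, ← mul_assoc, Nat.mul_mod_right]


lemma count_QQ_lt {m r : ℕ} (hm : 1 < m) {P : Multiset ℕ}
    (hA : ∀ i ∈ P, (P.count i % 2 = 0 → P.count i < 2 * m) ∧
      (P.count i % 2 = 1 → 2 * r + 1 ≤ P.count i ∧ P.count i ≤ 2 * (m + r) - 1)) :
    ∀ i, (QQ r P).count i < m := by
  intro i
  rw [count_QQ]
  by_cases hi : i ∈ P
  · obtain ⟨h1, h2⟩ := hA i hi
    by_cases hp : P.count i % 2 = 1
    · rw [hp]
      have := h2 hp
      omega
    · have hp0 : P.count i % 2 = 0 := by omega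
      rw [hp0]
      have := h1 hp0
      omega
  · rw [Multiset.count_eq_zero_of_notMem hi]
    simp
    omega

lemma bwdB_fwdA {m r : ℕ} (hm : 1 < m) {P : Multiset ℕ} (h0 : 0 ∉ P)
    (hA : ∀ i ∈ P, (P.count i % 2 = 0 → P.count i < 2 * m) ∧
      (P.count i % 2 = 1 → 2 * r + 1 ≤ P.count i ∧ P.count i ≤ 2 * (m + r) - 1)) :
    bwdB m r (fwdA m r P) = P := by
  rw [fwdA, bwdB]
  set M1 := (spread 2 (EQ P)).map (fun o => (2 * r + 1) * o) with hM1
  set M2 := (spread m (QQ r P)).map (fun t => 2 * t) with hM2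
  have hf1 : (M1 + M2).filter (fun p => p % 2 = 1) = M1 := by
    rw [Multiset.filter_add, Multiset.filter_eq_self.2 (fun p hp => (M1_parts (m := m) h0 p hp).2.1),
      Multiset.filter_eq_nil.2 (fun p hp => by
        have := (M2_parts hm h0 p hp).2.1
        omega), add_zero]
  have hf2 : (M1 + M2).filter (fun p => p % 2 = 0) = M2 := by
    rw [Multiset.filter_add, Multiset.filter_eq_nil.2 (fun p hp => by
        have := (M1_parts (m := m) h0 p hp).2.1
        omega),
      Multiset.filter_eq_self.2 (fun p hp => (M2_parts hm h0 p hp).2.1), zero_add]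
  rw [hf1, hf2, hM1, hM2, Multiset.map_map, Multiset.map_map]
  have hg1 : Multiset.map ((fun p => p / (2 * r + 1)) ∘ fun o => (2 * r + 1) * o)
      (spread 2 (EQ P)) = spread 2 (EQ P) := by
    rw [show ((fun p => p / (2 * r + 1)) ∘ fun o => (2 * r + 1) * o) =
        (fun o => (2 * r + 1) * o / (2 * r + 1)) from rfl]
    calc Multiset.map (fun o => (2 * r + 1) * o / (2 * r + 1)) (spread 2 (EQ P))
        = Multiset.map id (spread 2 (EQ P)) := by
          apply Multiset.map_congr rfl
          intro x _
          simp [Nat.mul_div_cancel_left _ (show 0 < 2 * r + 1 by omega)]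
      _ = _ := Multiset.map_id _
  have hg2 : Multiset.map ((fun p => p / 2) ∘ fun t => 2 * t)
      (spread m (QQ r P)) = spread m (QQ r P) := by
    calc Multiset.map ((fun p => p / 2) ∘ fun t => 2 * t) (spread m (QQ r P))
        = Multiset.map id (spread m (QQ r P)) := by
          apply Multiset.map_congr rfl
          intro x _
          simp
      _ = _ := Multiset.map_id _
  rw [hg1, hg2, unspread_spread (by norm_num) (zero_not_mem_EQ h0)
      (fun i => by rw [count_EQ]; omega),
    unspread_spread hm (zero_not_mem_QQ h0) (count_QQ_lt hm hA)]
  exact decompP (fun i hi h => ((hA i hi).2 h).1)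


lemma fwdA_bwdB {m r : ℕ} (hm : 1 < m) {S : Multiset ℕ} (h0 : 0 ∉ S)
    (hB : ∀ p ∈ S, p % (4 * r + 2) = 2 * r + 1 ∨ (p % 2 = 0 ∧ ¬ p % (2 * m) = 0)) :
    fwdA m r (bwdB m r S) = S := by
  set D1 := (S.filter fun p => p % 2 = 1).map (fun p => p / (2 * r + 1)) with hD1def
  set D2 := (S.filter fun p => p % 2 = 0).map (fun p => p / 2) with hD2def
  have hD1 : ∀ j ∈ D1, 0 < j ∧ ¬ 2 ∣ j := D1_parts h0 hB
  have hD2 : ∀ j ∈ D2, 0 < j ∧ ¬ m ∣ j := D2_parts h0 hB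
  set E' := unspread 2 D1 with hE'def
  set Q' := unspread m D2 with hQ'def
  have hE'lt : ∀ i, E'.count i < 2 := count_unspread_lt (by norm_num) hD1
  have hQ'lt : ∀ i, Q'.count i < m := count_unspread_lt hm hD2
  have hbwd : bwdB m r S = (2 * r + 1) • E' + 2 • Q' := rfl
  have hcnt : ∀ i, (bwdB m r S).count i = (2 * r + 1) * E'.count i + 2 * Q'.count i := by
    intro i
    rw [hbwd, Multiset.count_add, Multiset.count_nsmul, Multiset.count_nsmul]
  have hEQ : EQ (bwdB m r S) = E' := by
    ext i
    rw [count_EQ, hcnt i]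
    have h1 := hE'lt i
    interval_cases h : E'.count i
    · omega
    · omega
  have hQQ : QQ r (bwdB m r S) = Q' := by
    ext i
    rw [count_QQ, hcnt i]
    have h1 := hE'lt i
    interval_cases h : E'.count i
    · simp only [mul_zero, zero_add]
      have h2 : (2 * Q'.count i) % 2 = 0 := by omega
      rw [h2, zero_mul]
      omega
    · have : (2 * r + 1) * 1 + 2 * Q'.count i = 2 * (r + Q'.count i) + 1 := by ring
      rw [this]
      have h2 : (2 * (r + Q'.count i) + 1) % 2 = 1 := by omega
      rw [h2, one_mul]
      omega
  rw [fwdA, hEQ, hQQ, hE'def, hQ'def, spread_unspread (by norm_num) hD1,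
    spread_unspread hm hD2, hD1def, hD2def, Multiset.map_map, Multiset.map_map]
  have hg1 : Multiset.map ((fun o => (2 * r + 1) * o) ∘ fun p => p / (2 * r + 1))
      (S.filter fun p => p % 2 = 1) = S.filter fun p => p % 2 = 1 := by
    have hcg : ∀ p ∈ S.filter (fun p => p % 2 = 1),
        ((fun o => (2 * r + 1) * o) ∘ fun p => p / (2 * r + 1)) p = id p := by
      intro p hp
      rw [Multiset.mem_filter] at hp
      have hmod : p % (4 * r + 2) = 2 * r + 1 := by
        rcases hB p hp.1 with h | h
        · exact h
        · omega
      obtain ⟨t, ht⟩ := odd_part_eq hmod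
      show (2 * r + 1) * (p / (2 * r + 1)) = p
      rw [ht, Nat.mul_div_cancel_left _ (show 0 < 2 * r + 1 by omega)]
    rw [Multiset.map_congr rfl hcg, Multiset.map_id]
  have hg2 : Multiset.map ((fun t => 2 * t) ∘ fun p => p / 2)
      (S.filter fun p => p % 2 = 0) = S.filter fun p => p % 2 = 0 := by
    have hcg : ∀ p ∈ S.filter (fun p => p % 2 = 0),
        ((fun t => 2 * t) ∘ fun p => p / 2) p = id p := by
      intro p hp
      rw [Multiset.mem_filter] at hp
      show 2 * (p / 2) = p
      omega
    rw [Multiset.map_congr rfl hcg, Multiset.map_id]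
  rw [hg1, hg2]
  have : (S.filter fun p => p % 2 = 0) = S.filter (fun p => ¬ p % 2 = 1) := by
    apply Multiset.filter_congr
    intro p _
    constructor
    · omega
    · omega
  rw [this]
  exact Multiset.filter_add_not _ S


lemma odd_of_mod {r p : ℕ} (hp : p % (4 * r + 2) = 2 * r + 1) : p % 2 = 1 := by
  obtain ⟨t, ht⟩ := odd_part_eq hp
  have : p = 2 * (2 * r * t + r + t) + 1 := by rw [ht]; ring
  omega

lemma sum_map_mul (c : ℕ) (s : Multiset ℕ) : (s.map (fun x => c * x)).sum = c * s.sum := by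
  induction s using Multiset.induction_on with
  | empty => simp
  | cons a s ih => simp [Multiset.map_cons, ih, mul_add]

lemma fwdA_sum {m r : ℕ} (hm : 1 < m) {P : Multiset ℕ} (h0 : 0 ∉ P)
    (hA : ∀ i ∈ P, (P.count i % 2 = 1 → 2 * r + 1 ≤ P.count i)) :
    (fwdA m r P).sum = P.sum := by
  rw [fwdA, Multiset.sum_add, sum_map_mul, sum_map_mul,
    spread_sum (zero_not_mem_EQ h0), spread_sum (zero_not_mem_QQ h0)]
  conv_rhs => rw [← decompP hA]
  rw [Multiset.sum_add, Multiset.sum_nsmul, Multiset.sum_nsmul, smul_eq_mul, smul_eq_mul]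

lemma fwdA_pos {m r : ℕ} (hm : 1 < m) {P : Multiset ℕ} (h0 : 0 ∉ P) :
    ∀ p ∈ fwdA m r P, 0 < p := by
  intro p hp
  rw [fwdA, Multiset.mem_add] at hp
  rcases hp with hp | hp
  · exact (M1_parts (m := m) h0 p hp).1
  · exact (M2_parts hm h0 p hp).1

lemma fwdA_cond {m r : ℕ} (hm : 1 < m) {P : Multiset ℕ} (h0 : 0 ∉ P) :
    ∀ p ∈ fwdA m r P, p % (4 * r + 2) = 2 * r + 1 ∨ (p % 2 = 0 ∧ ¬ p % (2 * m) = 0) := by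
  intro p hp
  rw [fwdA, Multiset.mem_add] at hp
  rcases hp with hp | hp
  · exact Or.inl (M1_parts (m := m) h0 p hp).2.2
  · exact Or.inr ⟨(M2_parts hm h0 p hp).2.1, (M2_parts hm h0 p hp).2.2⟩

lemma bwdB_counts {m r : ℕ} (hm : 1 < m) {S : Multiset ℕ} (h0 : 0 ∉ S)
    (hB : ∀ p ∈ S, p % (4 * r + 2) = 2 * r + 1 ∨ (p % 2 = 0 ∧ ¬ p % (2 * m) = 0)) :
    ∀ i, ((bwdB m r S).count i % 2 = 0 → (bwdB m r S).count i < 2 * m) ∧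
      ((bwdB m r S).count i % 2 = 1 →
        2 * r + 1 ≤ (bwdB m r S).count i ∧ (bwdB m r S).count i ≤ 2 * (m + r) - 1) := by
  intro i
  have hD1 : ∀ j ∈ (S.filter fun p => p % 2 = 1).map (fun p => p / (2 * r + 1)),
      0 < j ∧ ¬ 2 ∣ j := D1_parts h0 hB
  have hD2 : ∀ j ∈ (S.filter fun p => p % 2 = 0).map (fun p => p / 2),
      0 < j ∧ ¬ m ∣ j := D2_parts h0 hB
  have he := count_unspread_lt (show (1:ℕ) < 2 by norm_num) hD1
    (t := i)
  have hq := count_unspread_lt hm hD2 (t := i)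
  have hcnt : (bwdB m r S).count i =
      (2 * r + 1) * (unspread 2 ((S.filter fun p => p % 2 = 1).map
        (fun p => p / (2 * r + 1)))).count i +
      2 * (unspread m ((S.filter fun p => p % 2 = 0).map (fun p => p / 2))).count i := by
    rw [bwdB, Multiset.count_add, Multiset.count_nsmul, Multiset.count_nsmul]
  rw [hcnt]
  set e := (unspread 2 ((S.filter fun p => p % 2 = 1).map (fun p => p / (2 * r + 1)))).count i
  set q := (unspread m ((S.filter fun p => p % 2 = 0).map (fun p => p / 2))).count i
  interval_cases e
  · rw [mul_zero, zero_add]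
    constructor
    · intro _
      omega
    · intro hc
      omega
  · have h1 : (2 * r + 1) * 1 + 2 * q = 2 * (r + q) + 1 := by ring
    rw [h1]
    constructor
    · intro hc
      omega
    · intro _
      omega

lemma bwdB_pos {m r : ℕ} (hm : 1 < m) {S : Multiset ℕ} (h0 : 0 ∉ S)
    (hB : ∀ p ∈ S, p % (4 * r + 2) = 2 * r + 1 ∨ (p % 2 = 0 ∧ ¬ p % (2 * m) = 0)) :
    ∀ p ∈ bwdB m r S, 0 < p := by
  intro p hp
  rcases Nat.eq_zero_or_pos p with rfl | h
  · exfalso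
    rw [bwdB, Multiset.mem_add] at hp
    rcases hp with hp | hp <;>
      · rw [Multiset.mem_nsmul] at hp
        first
        | exact zero_not_mem_unspread (show (1:ℕ) < 2 by norm_num) (D1_parts h0 hB) hp.2
        | exact zero_not_mem_unspread hm (D2_parts h0 hB) hp.2
  · exact h

lemma bwdB_sum {m r : ℕ} (hm : 1 < m) {S : Multiset ℕ} (h0 : 0 ∉ S)
    (hB : ∀ p ∈ S, p % (4 * r + 2) = 2 * r + 1 ∨ (p % 2 = 0 ∧ ¬ p % (2 * m) = 0)) :
    (bwdB m r S).sum = S.sum := by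
  have h1 := fwdA_sum hm (P := bwdB m r S)
    (fun h => by
      have := bwdB_pos hm h0 hB 0 h
      omega)
    (fun i _ => fun hc => ((bwdB_counts hm h0 hB i).2 hc).1)
  rw [fwdA_bwdB hm h0 hB] at h1
  omega

end SubbaraoAux

open SubbaraoAux in
/-- **Subbarao's finitization.** For integers `m > 1` and `r ≥ 0`, the number of partitions
of `n` in which every part with even multiplicity has multiplicity less than `2m` and every
part with odd multiplicity has multiplicity at least `2r + 1` and at most `2(m + r) - 1`,
equals the number of partitions of `n` in which every part is either odd and congruent to
`2r + 1` modulo `4r + 2`, or even and not congruent to `0` modulo `2m`. -/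
theorem subbarao (m r : ℕ) (hm : 1 < m) (n : ℕ) :
    Nat.card {π : n.Partition //
      ∀ i ∈ π.parts,
        (Even (π.parts.count i) → π.parts.count i < 2 * m) ∧
        (Odd (π.parts.count i) →
          2 * r + 1 ≤ π.parts.count i ∧ π.parts.count i ≤ 2 * (m + r) - 1)} =
    Nat.card {π : n.Partition //
      ∀ i ∈ π.parts,
        (Odd i ∧ i % (4 * r + 2) = 2 * r + 1) ∨ (Even i ∧ ¬ i % (2 * m) = 0)} := by
  apply Nat.card_congr
  -- translations of the two conditions
  have hAconv : ∀ (π : n.Partition),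
      (∀ i ∈ π.parts,
        (Even (π.parts.count i) → π.parts.count i < 2 * m) ∧
        (Odd (π.parts.count i) →
          2 * r + 1 ≤ π.parts.count i ∧ π.parts.count i ≤ 2 * (m + r) - 1)) ↔
      (∀ i ∈ π.parts, (π.parts.count i % 2 = 0 → π.parts.count i < 2 * m) ∧
        (π.parts.count i % 2 = 1 → 2 * r + 1 ≤ π.parts.count i ∧
          π.parts.count i ≤ 2 * (m + r) - 1)) := by
    intro π
    constructor
    · intro h i hi
      exact ⟨fun h2 => (h i hi).1 (Nat.even_iff.mpr h2),
        fun h2 => (h i hi).2 (Nat.odd_iff.mpr h2)⟩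
    · intro h i hi
      exact ⟨fun h2 => (h i hi).1 (Nat.even_iff.mp h2),
        fun h2 => (h i hi).2 (Nat.odd_iff.mp h2)⟩
  have hBconv : ∀ (π : n.Partition),
      (∀ i ∈ π.parts,
        (Odd i ∧ i % (4 * r + 2) = 2 * r + 1) ∨ (Even i ∧ ¬ i % (2 * m) = 0)) ↔
      (∀ p ∈ π.parts, p % (4 * r + 2) = 2 * r + 1 ∨ (p % 2 = 0 ∧ ¬ p % (2 * m) = 0)) := by
    intro π
    constructor
    · intro h p hp
      rcases h p hp with h1 | h1
      · exact Or.inl h1.2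
      · exact Or.inr ⟨Nat.even_iff.mp h1.1, h1.2⟩
    · intro h p hp
      rcases h p hp with h1 | h1
      · exact Or.inl ⟨Nat.odd_iff.mpr (odd_of_mod h1), h1⟩
      · exact Or.inr ⟨Nat.even_iff.mpr h1.1, h1.2⟩
  have hzero : ∀ (π : n.Partition), (0 : ℕ) ∉ π.parts := by
    intro π h
    exact absurd (π.parts_pos h) (lt_irrefl 0)
  refine
    { toFun := fun x =>
        ⟨⟨fwdA m r x.1.parts, ?_, ?_⟩, ?_⟩
      invFun := fun y =>
        ⟨⟨bwdB m r y.1.parts, ?_, ?_⟩, ?_⟩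
      left_inv := ?_
      right_inv := ?_ }
  · exact fun {i} hi => fwdA_pos hm (hzero x.1) i hi
  · rw [fwdA_sum hm (hzero x.1)
      (fun i hi hc => (((hAconv x.1).mp x.2 i hi).2 hc).1), x.1.parts_sum]
  · -- B condition for the image
    intro i hi
    rcases fwdA_cond hm (hzero x.1) i hi with h1 | h1
    · exact Or.inl ⟨Nat.odd_iff.mpr (odd_of_mod h1), h1⟩
    · exact Or.inr ⟨Nat.even_iff.mpr h1.1, h1.2⟩
  · exact fun {i} hi => bwdB_pos hm (hzero y.1) ((hBconv y.1).mp y.2) i hi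
  · rw [bwdB_sum hm (hzero y.1) ((hBconv y.1).mp y.2), y.1.parts_sum]
  · -- A condition for the preimage
    refine (hAconv _).mpr ?_
    intro i hi
    exact bwdB_counts hm (hzero y.1) ((hBconv y.1).mp y.2) i
  · intro x
    apply Subtype.ext
    apply Nat.Partition.ext
    exact bwdB_fwdA hm (hzero x.1) ((hAconv x.1).mp x.2)
  · intro y
    apply Subtype.ext
    apply Nat.Partition.ext
    exact fwdA_bwdB hm (hzero y.1) ((hBconv y.1).mp y.2)
end

section
/- For all natural numbers n, the number of partitions of n in which every multiplicity that is congruent to ja modulo p for some 0 ≤ j ≤ p − 1 is at least j(pr + a), equals the number of partitions of n in which every part not divisible by p is congruent to −s(pr + a) modulo p²r + pa for some s ∈ {1, 2, …, p − 1}. -/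
open PowerSeries Finset
open scoped Classical

noncomputable section

namespace AndrewsAux

variable {α : Type*}

/-- A convenience constructor for the power series whose coefficients indicate a subset. -/
def indicatorSeries (α : Type*) [Semiring α] (s : Set ℕ) : PowerSeries α :=
  PowerSeries.mk fun n => if n ∈ s then 1 else 0

theorem coeff_indicator (s : Set ℕ) [Semiring α] (n : ℕ) :
    coeff n (indicatorSeries α s) = if n ∈ s then 1 else 0 :=
  coeff_mk _ _

theorem coeff_indicator_pos (s : Set ℕ) [Semiring α] (n : ℕ) (h : n ∈ s) :
    coeff n (indicatorSeries α s) = 1 := by rw [coeff_indicator, if_pos h]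

theorem coeff_indicator_neg (s : Set ℕ) [Semiring α] (n : ℕ) (h : n ∉ s) :
    coeff n (indicatorSeries α s) = 0 := by rw [coeff_indicator, if_neg h]

theorem constantCoeff_indicator (s : Set ℕ) [Semiring α] :
    constantCoeff (indicatorSeries α s) = if 0 ∈ s then 1 else 0 :=
  rfl

theorem num_series' [Field α] (i : ℕ) :
    (1 - (X : PowerSeries α) ^ (i + 1))⁻¹ = indicatorSeries α {k | i + 1 ∣ k} := by
  rw [PowerSeries.inv_eq_iff_mul_eq_one]
  · ext n
    cases n with
    | zero => simp [mul_sub, zero_pow, constantCoeff_indicator]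
    | succ n =>
      simp only [coeff_one, if_false, mul_sub, mul_one, coeff_indicator,
        LinearMap.map_sub, reduceCtorEq]
      simp_rw [coeff_mul, coeff_X_pow, coeff_indicator, @boole_mul _ _ _ _]
      erw [@sum_ite _ _ _ _ _ (fun _ => Classical.propDecidable _), sum_ite]
      simp_rw [@filter_filter _ _ _ _ _, sum_const_zero, add_zero, sum_const, nsmul_eq_mul, mul_one,
        sub_eq_iff_eq_add, zero_add]
      symm
      split_ifs with h
      · suffices #{a ∈ antidiagonal (n + 1) | i + 1 ∣ a.fst ∧ a.snd = i + 1} = 1 by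
          simp only [Set.mem_setOf_eq]; convert congr_arg ((↑) : ℕ → α) this; norm_cast
        rw [card_eq_one]
        cases' h with p hp
        refine ⟨((i + 1) * (p - 1), i + 1), ?_⟩
        ext ⟨a₁, a₂⟩
        simp only [mem_filter, Prod.mk.injEq, Finset.HasAntidiagonal.mem_antidiagonal, mem_singleton]
        constructor
        · rintro ⟨a_left, ⟨a, rfl⟩, rfl⟩
          refine ⟨?_, rfl⟩
          rw [Nat.mul_sub_left_distrib, ← hp, ← a_left, mul_one, Nat.add_sub_cancel]
        · rintro ⟨rfl, rfl⟩
          match p with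
          | 0 => rw [mul_zero] at hp; cases hp
          | p + 1 => rw [hp]; simp [mul_add]
      · suffices #{a ∈ antidiagonal (n + 1) | i + 1 ∣ a.fst ∧ a.snd = i + 1} = 0 by
          simp only [Set.mem_setOf_eq]; convert congr_arg ((↑) : ℕ → α) this; norm_cast
        rw [card_eq_zero]
        apply eq_empty_of_forall_notMem
        simp only [Prod.forall, mem_filter, not_and, Finset.HasAntidiagonal.mem_antidiagonal]
        rintro _ h₁ h₂ ⟨a, rfl⟩ rfl
        apply h
        simp [← h₂]
  · simp [zero_pow]

theorem num_series [Field α] (k : ℕ) (hk : 0 < k) :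
    (1 - (X : PowerSeries α) ^ k)⁻¹ = indicatorSeries α {m | k ∣ m} := by
  obtain ⟨i, rfl⟩ := Nat.exists_eq_succ_of_ne_zero hk.ne'
  exact num_series' i

-- The main workhorse of the partition theorem proof (verbatim from the mathlib archive).
theorem partialGF_prop (α : Type*) [CommSemiring α] (n : ℕ) (s : Finset ℕ) (hs : ∀ i ∈ s, 0 < i)
    (c : ℕ → Set ℕ) (hc : ∀ i, i ∉ s → 0 ∈ c i) :
    #{p : n.Partition | (∀ j, p.parts.count j ∈ c j) ∧ ∀ j ∈ p.parts, j ∈ s} =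
      coeff n (∏ i ∈ s, indicatorSeries α ((· * i) '' c i)) := by
  simp_rw [coeff_prod, coeff_indicator, prod_boole, sum_boole]
  apply congr_arg
  simp only [mem_univ, forall_true_left, not_and, not_forall, exists_prop,
    Set.mem_image, not_exists]
  set φ : (a : Nat.Partition n) →
    a ∈ filter (fun p ↦ (∀ (j : ℕ), Multiset.count j p.parts ∈ c j) ∧ ∀ j ∈ p.parts, j ∈ s) univ →
    ℕ →₀ ℕ := fun p _ => {
      toFun := fun i => Multiset.count i p.parts • i
      support := Finset.filter (fun i => i ≠ 0) p.parts.toFinset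
      mem_support_toFun := fun a => by
        simp only [smul_eq_mul, ne_eq, mul_eq_zero, Multiset.count_eq_zero]
        rw [not_or, not_not]
        simp only [Multiset.mem_toFinset, not_not, mem_filter] }
  refine Finset.card_bij φ ?_ ?_ ?_
  · intro a ha
    simp only [φ, not_forall, not_exists, not_and, exists_prop, mem_filter]
    rw [mem_finsuppAntidiag]
    dsimp only [ne_eq, smul_eq_mul, id_eq, eq_mpr_eq_cast, le_eq_subset, Finsupp.coe_mk]
    simp only [mem_univ, forall_true_left, not_and, not_forall, exists_prop,
      mem_filter, true_and] at ha
    refine ⟨⟨?_, fun i ↦ ?_⟩, fun i _ ↦ ⟨a.parts.count i, ha.1 i, rfl⟩⟩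
    · conv_rhs => simp [← a.parts_sum]
      rw [sum_multiset_count_of_subset _ s]
      · simp only [smul_eq_mul]
      · intro i
        simp only [Multiset.mem_toFinset, not_not, mem_filter]
        apply ha.2
    · simp only [ne_eq, Multiset.mem_toFinset, not_not, mem_filter, and_imp]
      exact fun hi _ ↦ ha.2 i hi
  · skip
    intro p₁ hp₁ p₂ hp₂ h
    apply Nat.Partition.ext
    simp only [true_and, mem_univ, mem_filter] at hp₁ hp₂
    ext i
    simp only [φ, ne_eq, Multiset.mem_toFinset, not_not, smul_eq_mul, Finsupp.mk.injEq] at h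
    by_cases hi : i = 0
    · rw [hi]
      rw [Multiset.count_eq_zero_of_notMem]
      · rw [Multiset.count_eq_zero_of_notMem]
        intro a; exact Nat.lt_irrefl 0 (hs 0 (hp₂.2 0 a))
      intro a; exact Nat.lt_irrefl 0 (hs 0 (hp₁.2 0 a))
    · rw [← mul_left_inj' hi]
      rw [funext_iff] at h
      exact h.2 i
  · simp only [φ, mem_filter, mem_finsuppAntidiag, mem_univ, exists_prop, true_and, and_assoc]
    rintro f ⟨hf, hf₃, hf₄⟩
    have hf' : f ∈ finsuppAntidiag s n := mem_finsuppAntidiag.mpr ⟨hf, hf₃⟩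
    simp only [mem_finsuppAntidiag] at hf'
    refine ⟨⟨∑ i ∈ s, Multiset.replicate (f i / i) i, ?_, ?_⟩, ?_, ?_, ?_⟩
    · intro i hi
      simp only [exists_prop, Multiset.mem_sum, mem_map, Function.Embedding.coeFn_mk] at hi
      rcases hi with ⟨t, ht, z⟩
      apply hs
      rwa [Multiset.eq_of_mem_replicate z]
    · simp_rw [Multiset.sum_sum, Multiset.sum_replicate, Nat.nsmul_eq_mul]
      rw [← hf'.1]
      refine sum_congr rfl fun i hi => Nat.div_mul_cancel ?_
      rcases hf₄ i hi with ⟨w, _, hw₂⟩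
      rw [← hw₂]
      exact dvd_mul_left _ _
    · intro i
      simp_rw [Multiset.count_sum', Multiset.count_replicate, sum_ite_eq']
      split_ifs with h
      · rcases hf₄ i h with ⟨w, hw₁, hw₂⟩
        rwa [← hw₂, Nat.mul_div_cancel _ (hs i h)]
      · exact hc _ h
    · intro i hi
      rw [Multiset.mem_sum] at hi
      rcases hi with ⟨j, hj₁, hj₂⟩
      rwa [Multiset.eq_of_mem_replicate hj₂]
    · ext i
      simp_rw [Multiset.count_sum', Multiset.count_replicate, sum_ite_eq']
      simp only [ne_eq, Multiset.mem_toFinset, not_not, smul_eq_mul, ite_mul,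
        zero_mul, Finsupp.coe_mk]
      split_ifs with h
      · apply Nat.div_mul_cancel
        rcases hf₄ i h with ⟨w, _, hw₂⟩
        apply Dvd.intro_left _ hw₂
      · apply symm
        rw [← Finsupp.notMem_support_iff]
        exact notMem_mono hf'.2 h

/-- If sums of elements of `T₁` and `T₂` decompose uniquely, the product of the indicator
series is the indicator series of the sumset. -/
theorem indicator_mul [Field α] (T₁ T₂ : Set ℕ)
    (h : ∀ x₁ y₁ x₂ y₂, x₁ ∈ T₁ → y₁ ∈ T₂ → x₂ ∈ T₁ → y₂ ∈ T₂ → x₁ + y₁ = x₂ + y₂ → x₁ = x₂) :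
    indicatorSeries α T₁ * indicatorSeries α T₂ =
      indicatorSeries α {m | ∃ x ∈ T₁, ∃ y ∈ T₂, x + y = m} := by
  ext n
  rw [coeff_mul, coeff_indicator]
  simp_rw [coeff_indicator]
  have : ∀ ab : ℕ × ℕ,
      (if ab.1 ∈ T₁ then (1 : α) else 0) * (if ab.2 ∈ T₂ then (1 : α) else 0) =
        if ab.1 ∈ T₁ ∧ ab.2 ∈ T₂ then 1 else 0 := by
    intro ab; split_ifs with h1 h2 h3 <;> simp_all
  rw [Finset.sum_congr rfl fun ab _ => this ab, Finset.sum_boole]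
  split_ifs with hmem
  · obtain ⟨x₀, hx₀, y₀, hy₀, hxy₀⟩ := hmem
    suffices #{ab ∈ antidiagonal n | ab.1 ∈ T₁ ∧ ab.2 ∈ T₂} = 1 by rw [this]; norm_num
    rw [card_eq_one]
    refine ⟨(x₀, y₀), ?_⟩
    ext ⟨u, v⟩
    simp only [mem_filter, Finset.HasAntidiagonal.mem_antidiagonal, mem_singleton, Prod.mk.injEq]
    constructor
    · rintro ⟨huv, hu, hv⟩
      have hu' : u = x₀ := h u v x₀ y₀ hu hv hx₀ hy₀ (by omega)
      exact ⟨hu', by omega⟩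
    · rintro ⟨rfl, rfl⟩
      exact ⟨hxy₀, hx₀, hy₀⟩
  · suffices #{ab ∈ antidiagonal n | ab.1 ∈ T₁ ∧ ab.2 ∈ T₂} = 0 by rw [this]; norm_num
    rw [card_eq_zero]
    apply eq_empty_of_forall_notMem
    rintro ⟨u, v⟩ huv
    simp only [mem_filter, Finset.HasAntidiagonal.mem_antidiagonal] at huv
    exact hmem ⟨u, huv.2.1, v, huv.2.2, huv.1⟩

theorem indicator_image [Field α] (e P : ℕ) (he : 0 < e) :
    indicatorSeries α {m | ∃ j < P, m = j * e} = ∑ j ∈ range P, X ^ (j * e) := by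
  ext n
  rw [coeff_indicator, map_sum]
  simp_rw [coeff_X_pow]
  split_ifs with hmem
  · obtain ⟨j, hj, rfl⟩ := hmem
    rw [Finset.sum_eq_single_of_mem j (mem_range.2 hj)]
    · rw [if_pos rfl]
    · intro b _ hb
      rw [if_neg]
      intro hEq
      exact hb (Nat.eq_of_mul_eq_mul_right he hEq).symm
  · symm
    apply Finset.sum_eq_zero
    intro j hj
    rw [if_neg]
    intro hEq
    exact hmem ⟨j, mem_range.1 hj, hEq⟩

theorem constCoeff_one_sub_X_pow [Field α] (e : ℕ) (he : 0 < e) :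
    constantCoeff (1 - (X : PowerSeries α) ^ e) ≠ 0 := by
  rw [map_sub, map_pow, constantCoeff_one, constantCoeff_X, zero_pow he.ne', sub_zero]
  exact one_ne_zero

theorem geom_aux [Field α] (e P : ℕ) (he : 0 < e) :
    (∑ j ∈ range P, (X : PowerSeries α) ^ (j * e)) = (1 - X ^ (P * e)) * (1 - X ^ e)⁻¹ := by
  have h2 : (∑ j ∈ range P, (X : PowerSeries α) ^ (j * e)) * (1 - X ^ e) = 1 - X ^ (P * e) := by
    have hg := geom_sum_mul ((X : PowerSeries α) ^ e) P
    have hre : ∀ j : ℕ, (X : PowerSeries α) ^ (j * e) = ((X : PowerSeries α) ^ e) ^ j := fun j =>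
      by rw [← pow_mul, mul_comm]
    simp_rw [hre]
    linear_combination (-1 : PowerSeries α) * hg
  rw [← h2, mul_assoc, PowerSeries.mul_inv_cancel _ (constCoeff_one_sub_X_pow e he), mul_one]

theorem coeff_drop [Field α] (n : ℕ) (f : PowerSeries α) {ι : Type*} (s : Finset ι) (e : ι → ℕ)
    (h : ∀ i ∈ s, n < e i) :
    coeff n (f * ∏ i ∈ s, (1 - X ^ e i)) = coeff n f := by
  apply coeff_mul_prod_one_sub_of_lt_order
  intro i hi
  rw [order_X_pow]
  exact_mod_cast h i hi

theorem coeff_drop_inv [Field α] (n : ℕ) (f : PowerSeries α) {ι : Type*} (s : Finset ι)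
    (e : ι → ℕ) (h : ∀ i ∈ s, n < e i) :
    coeff n (f * ∏ i ∈ s, (1 - X ^ e i)⁻¹) = coeff n f := by
  have key : (f * ∏ i ∈ s, (1 - X ^ e i)⁻¹) * ∏ i ∈ s, (1 - X ^ e i) = f := by
    rw [mul_assoc, ← Finset.prod_mul_distrib,
      Finset.prod_congr rfl fun i hi => ?_, Finset.prod_const_one, mul_one]
    rw [mul_comm, PowerSeries.mul_inv_cancel _
      (constCoeff_one_sub_X_pow _ (Nat.lt_of_le_of_lt (Nat.zero_le n) (h i hi)))]
  conv_rhs => rw [← key]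
  rw [coeff_drop n _ s e h]

theorem prod_inv_mul_prod [Field α] {ι : Type*} (s : Finset ι) (e : ι → ℕ)
    (h : ∀ i ∈ s, 0 < e i) :
    (∏ i ∈ s, (1 - (X : PowerSeries α) ^ e i)⁻¹) * ∏ i ∈ s, (1 - X ^ e i) = 1 := by
  rw [← Finset.prod_mul_distrib, Finset.prod_congr rfl fun i hi => ?_, Finset.prod_const_one]
  rw [mul_comm, PowerSeries.mul_inv_cancel _ (constCoeff_one_sub_X_pow _ (h i hi))]

/-- The key local computation: the indicator series of the set of allowed multiplicities,
scaled by a part `i`, factors as a ratio of geometric-type series. -/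
theorem indicator_C_eq [Field α] (p d : ℕ) (hp : 0 < p) (hd : 0 < d) (hpd : Nat.Coprime d p)
    (i : ℕ) (hi : 0 < i) :
    indicatorSeries α ((· * i) '' {c | ∃ j, j < p ∧ ∃ u, c = j * d + p * u}) =
      (1 - X ^ (p * d * i)) * ((1 - X ^ (d * i))⁻¹ * (1 - X ^ (p * i))⁻¹) := by
  have himg : ((· * i) '' {c | ∃ j, j < p ∧ ∃ u, c = j * d + p * u}) =
      {m | ∃ x ∈ {m' | ∃ j < p, m' = j * (d * i)}, ∃ y ∈ {m' | p * i ∣ m'}, x + y = m} := by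
    ext m
    simp only [Set.mem_image, Set.mem_setOf_eq]
    constructor
    · rintro ⟨c, ⟨j, hj, u, rfl⟩, rfl⟩
      exact ⟨j * (d * i), ⟨j, hj, rfl⟩, u * (p * i), ⟨u, by ring⟩, by ring⟩
    · rintro ⟨x, ⟨j, hj, rfl⟩, y, ⟨u, rfl⟩, rfl⟩
      exact ⟨j * d + p * u, ⟨j, hj, u, rfl⟩, by ring⟩
  have huniq : ∀ x₁ y₁ x₂ y₂ : ℕ, x₁ ∈ {m' | ∃ j < p, m' = j * (d * i)} → y₁ ∈ {m' | p * i ∣ m'} →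
      x₂ ∈ {m' | ∃ j < p, m' = j * (d * i)} → y₂ ∈ {m' | p * i ∣ m'} →
      x₁ + y₁ = x₂ + y₂ → x₁ = x₂ := by
    rintro x₁ y₁ x₂ y₂ ⟨j₁, hj₁, rfl⟩ ⟨u₁, rfl⟩ ⟨j₂, hj₂, rfl⟩ ⟨u₂, rfl⟩ heq
    suffices hjj : j₁ = j₂ by rw [hjj]
    have h'' : i * (j₁ * d + p * u₁) = i * (j₂ * d + p * u₂) := by
      calc i * (j₁ * d + p * u₁) = j₁ * (d * i) + p * i * u₁ := by ring
        _ = j₂ * (d * i) + p * i * u₂ := heq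
        _ = i * (j₂ * d + p * u₂) := by ring
    have h' := Nat.eq_of_mul_eq_mul_left hi h''
    have hmod : j₁ * d ≡ j₂ * d [MOD p] := by
      show _ % p = _ % p
      rw [← Nat.add_mul_mod_self_left (j₁ * d) p u₁, ← Nat.add_mul_mod_self_left (j₂ * d) p u₂, h']
    have hc := Nat.ModEq.cancel_right_of_coprime (c := d) (by rw [Nat.gcd_comm]; exact hpd) hmod
    rwa [Nat.ModEq, Nat.mod_eq_of_lt hj₁, Nat.mod_eq_of_lt hj₂] at hc
  rw [himg, ← indicator_mul _ _ huniq, indicator_image (d * i) p (by positivity),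
    geom_aux _ _ (by positivity), num_series (d * i) (by positivity),
    num_series (p * i) (by positivity)]
  rw [show p * (d * i) = p * d * i from by ring]
  ring

end AndrewsAux

end

open AndrewsAux Finset
open scoped Classical

/-- **Extension of Andrews' theorem (the case `m = ∞`).** Let `p, a` be positive coprime
integers and `r ≥ 0`. The number of partitions of `n` in which every multiplicity that is
congruent to `j·a (mod p)` for some `0 ≤ j ≤ p - 1` is at least `j(pr + a)` equals the
number of partitions of `n` in which every part not divisible by `p` is congruent to
`-s(pr + a) (mod p²r + pa)` for some `s ∈ {1, …, p - 1}`. -/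
theorem b_infty_eq_e_infty (p a r : ℕ) (hp : 0 < p) (ha : 0 < a)
    (hco : Nat.gcd a p = 1) (n : ℕ) :
    Nat.card {π : n.Partition //
      ∀ i ∈ π.parts, ∀ j ≤ p - 1,
        π.parts.count i ≡ j * a [MOD p] → j * (p * r + a) ≤ π.parts.count i} =
    Nat.card {π : n.Partition //
      ∀ i ∈ π.parts, ¬ p ∣ i → ∃ s, 1 ≤ s ∧ s ≤ p - 1 ∧
        (i : ℤ) ≡ -(s * (p * r + a)) [ZMOD ((p : ℤ) ^ 2 * r + p * a)]} := by
  classical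
  have hd0 : 0 < p * r + a := by positivity
  set d := p * r + a with hd
  haveI : NeZero p := ⟨hp.ne'⟩
  have hdp : Nat.Coprime d p := by simpa [Nat.Coprime, hd] using hco
  set C : Set ℕ := {c | ∃ j, j < p ∧ ∃ u, c = j * d + p * u} with hCdef
  set S : Set ℕ := {x | p ∣ x ∨ ∃ k, ¬ p ∣ k ∧ x = d * k} with hSdef
  have d_mod : d ≡ a [MOD p] := by
    rw [hd]; exact Nat.mul_add_mod p r a
  have exists_j : ∀ c : ℕ, ∃ j, j < p ∧ c ≡ j * a [MOD p] := by
    intro c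
    refine ⟨((c : ZMod p) * (a : ZMod p)⁻¹).val, ZMod.val_lt _, ?_⟩
    have hcast : ((((c : ZMod p) * (a : ZMod p)⁻¹).val * a : ℕ) : ZMod p) = (c : ZMod p) := by
      push_cast
      rw [ZMod.natCast_val, ZMod.cast_id, mul_assoc,
        mul_comm ((a : ZMod p))⁻¹ (a : ZMod p), ZMod.coe_mul_inv_eq_one a hco, mul_one]
    exact ((ZMod.natCast_eq_natCast_iff _ _ _).mp hcast).symm
  have unique_j : ∀ j j' : ℕ, j < p → j' < p → j * a ≡ j' * a [MOD p] → j = j' := by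
    intro j j' hj hj' hmod
    have h2 := Nat.ModEq.cancel_right_of_coprime (c := a) (by rw [Nat.gcd_comm]; exact hco) hmod
    rwa [Nat.ModEq, Nat.mod_eq_of_lt hj, Nat.mod_eq_of_lt hj'] at h2
  have hBpred : ∀ c : ℕ, (∀ j ≤ p - 1, c ≡ j * a [MOD p] → j * d ≤ c) ↔ c ∈ C := by
    intro c
    constructor
    · intro h
      obtain ⟨j, hj, hmod⟩ := exists_j c
      have h1 : j * d ≤ c := h j (by omega) hmod
      have h2 : c ≡ j * d [MOD p] := hmod.trans (Nat.ModEq.mul_left j d_mod.symm)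
      obtain ⟨u, hu⟩ := (Nat.modEq_iff_dvd' h1).mp h2.symm
      exact ⟨j, hj, u, by omega⟩
    · rintro ⟨j', hj', u, rfl⟩ j hj hmod
      have hj2 : j < p := by omega
      have hmod2 : j * a ≡ j' * a [MOD p] := by
        have h3 : (j' * d + p * u) ≡ j' * d [MOD p] := by
          show _ % p = _ % p
          exact Nat.add_mul_mod_self_left (j' * d) p u
        exact hmod.symm.trans (h3.trans (Nat.ModEq.mul_left j' d_mod))
      rw [unique_j j j' hj2 hj' hmod2]
      exact Nat.le_add_right _ _
  have hEpred : ∀ i : ℕ, 0 < i →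
      ((¬ p ∣ i → ∃ s : ℕ, 1 ≤ s ∧ s ≤ p - 1 ∧
        (i : ℤ) ≡ -((s : ℤ) * ((p : ℤ) * r + a)) [ZMOD ((p : ℤ) ^ 2 * r + p * a)]) ↔ i ∈ S) := by
    intro i hi
    constructor
    · intro h
      by_cases hpi : p ∣ i
      · exact Or.inl hpi
      · obtain ⟨s, hs1, hs2, hmod⟩ := h hpi
        right
        obtain ⟨m, hm⟩ := Int.modEq_iff_dvd.mp hmod
        set k : ℤ := -((p : ℤ) * m) - (s : ℤ) with hk
        have hik : (i : ℤ) = ((p : ℤ) * r + a) * k := by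
          rw [hk]; linear_combination (-1 : ℤ) * hm
        have hdz : (0 : ℤ) < (p : ℤ) * r + a := by positivity
        have hipos : (0 : ℤ) < (i : ℤ) := by exact_mod_cast hi
        have hk0 : 0 < k := by nlinarith [hik, hdz, hipos]
        refine ⟨k.toNat, ?_, ?_⟩
        · rintro ⟨t, ht⟩
          have hdvdk : (p : ℤ) ∣ k := by
            refine ⟨(t : ℤ), ?_⟩
            rw [← Int.toNat_of_nonneg hk0.le]
            exact_mod_cast ht
          have hs_eq : (s : ℤ) = -((p : ℤ) * m) - k := by rw [hk]; ring
          have hps : (p : ℤ) ∣ (s : ℤ) := by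
            rw [hs_eq]
            exact dvd_sub (dvd_neg.mpr (dvd_mul_right _ m)) hdvdk
          have := Int.le_of_dvd (by omega) hps
          omega
        · have hk' : ((k.toNat : ℕ) : ℤ) = k := Int.toNat_of_nonneg hk0.le
          have hfin : (i : ℤ) = ((d * k.toNat : ℕ) : ℤ) := by
            push_cast [hk', hd]
            rw [hik]
          exact_mod_cast hfin
    · intro hmem hpi
      rcases hmem with hdvd | ⟨k, hk, rfl⟩
      · exact absurd hdvd hpi
      · have hp2 : 2 ≤ p := by
          by_contra hcon
          have hp1 : p = 1 := by omega
          exact hk (hp1 ▸ one_dvd k)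
        set q := k / p with hqdef
        set t := k % p with htdef
        have ht1 : t ≠ 0 := fun h0 => hk (Nat.dvd_of_mod_eq_zero h0)
        have ht2 : t < p := Nat.mod_lt _ hp
        have hkq : k = p * q + t := (Nat.div_add_mod k p).symm
        refine ⟨p - t, by omega, by omega, ?_⟩
        rw [Int.modEq_iff_dvd]
        refine ⟨-(((q : ℕ) : ℤ) + 1), ?_⟩
        have hck : ((d * k : ℕ) : ℤ) = ((p : ℤ) * r + a) * ((p : ℤ) * q + t) := by
          rw [hd, hkq]; push_cast; ring
        have hpt : ((p - t : ℕ) : ℤ) = (p : ℤ) - (t : ℤ) := by omega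
        rw [hck, hpt]
        ring
  -- predicate characterizations at the level of partitions
  have hBiff : ∀ π : n.Partition,
      (∀ i ∈ π.parts, ∀ j ≤ p - 1, π.parts.count i ≡ j * a [MOD p] → j * d ≤ π.parts.count i)
        ↔ (∀ i, π.parts.count i ∈ C) ∧ ∀ i ∈ π.parts, i ∈ Finset.Ioc 0 n := by
    intro π
    constructor
    · intro h
      refine ⟨fun i => ?_, fun i hi => ?_⟩
      · by_cases hi : i ∈ π.parts
        · exact (hBpred _).mp (h i hi)
        · rw [Multiset.count_eq_zero_of_notMem hi]
          exact ⟨0, hp, 0, by ring⟩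
      · rw [Finset.mem_Ioc]
        exact ⟨π.parts_pos hi,
          by simpa [π.parts_sum] using Multiset.single_le_sum (fun _ _ => Nat.zero_le _) _ hi⟩
    · rintro ⟨h1, -⟩ i hi
      exact (hBpred _).mpr (h1 i)
  have hEiff : ∀ π : n.Partition,
      (∀ i ∈ π.parts, ¬ p ∣ i → ∃ s : ℕ, 1 ≤ s ∧ s ≤ p - 1 ∧
          (i : ℤ) ≡ -((s : ℤ) * ((p : ℤ) * r + a)) [ZMOD ((p : ℤ) ^ 2 * r + p * a)])
        ↔ (∀ i, π.parts.count i ∈ (Set.univ : Set ℕ)) ∧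
          ∀ i ∈ π.parts, i ∈ filter (· ∈ S) (Finset.Ioc 0 n) := by
    intro π
    constructor
    · intro h
      refine ⟨fun _ => trivial, fun i hi => ?_⟩
      rw [Finset.mem_filter, Finset.mem_Ioc]
      have hpos := π.parts_pos hi
      exact ⟨⟨hpos,
        by simpa [π.parts_sum] using Multiset.single_le_sum (fun _ _ => Nat.zero_le _) _ hi⟩,
        (hEpred i hpos).mp (h i hi)⟩
    · rintro ⟨-, h2⟩ i hi
      exact (hEpred i (π.parts_pos hi)).mpr (Finset.mem_filter.mp (h2 i hi)).2
    -- basic facts about ranges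
  have hposIoc : ∀ m i : ℕ, i ∈ Finset.Ioc 0 m → 0 < i := fun m i hi => (Finset.mem_Ioc.mp hi).1
  have hgt : ∀ c : ℕ, 0 < c → ∀ i ∈ Finset.Ioc (n / c) n, n < c * i := by
    intro c hc i hi
    have h1 := (Finset.mem_Ioc.mp hi).1
    rw [Nat.div_lt_iff_lt_mul hc] at h1
    rwa [mul_comm]
  have rearr : ∀ g gx a' ax b bx : PowerSeries ℚ,
      (g * gx) * ((a' * ax) * (b * bx)) = (((g * (a' * b)) * gx) * ax) * bx :=
    fun _ _ _ _ _ _ => by ring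
  -- B side: the generating function reduces to the common core
  have hprodB : (∏ i ∈ Finset.Ioc 0 n, indicatorSeries ℚ ((· * i) '' C)) =
      (∏ i ∈ Finset.Ioc 0 n, (1 - (X : PowerSeries ℚ) ^ (p * d * i))) *
      ((∏ i ∈ Finset.Ioc 0 n, (1 - (X : PowerSeries ℚ) ^ (d * i))⁻¹) *
       (∏ i ∈ Finset.Ioc 0 n, (1 - (X : PowerSeries ℚ) ^ (p * i))⁻¹)) := by
    rw [← Finset.prod_mul_distrib, ← Finset.prod_mul_distrib]
    refine Finset.prod_congr rfl fun i hi => ?_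
    rw [hCdef]
    exact indicator_C_eq p d hp hd0 hdp i (hposIoc n i hi)
  have hBcoeff : (coeff n) (∏ i ∈ Finset.Ioc 0 n, indicatorSeries ℚ ((· * i) '' C)) =
      (coeff n) ((∏ i ∈ Finset.Ioc 0 (n / (p * d)), (1 - (X : PowerSeries ℚ) ^ (p * d * i))) *
        ((∏ i ∈ Finset.Ioc 0 (n / d), (1 - (X : PowerSeries ℚ) ^ (d * i))⁻¹) *
         (∏ i ∈ Finset.Ioc 0 (n / p), (1 - (X : PowerSeries ℚ) ^ (p * i))⁻¹))) := by
    rw [hprodB,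
      ← Finset.prod_Ioc_consecutive (fun i => 1 - (X : PowerSeries ℚ) ^ (p * d * i))
        (Nat.zero_le (n / (p * d))) (Nat.div_le_self n (p * d)),
      ← Finset.prod_Ioc_consecutive (fun i => (1 - (X : PowerSeries ℚ) ^ (d * i))⁻¹)
        (Nat.zero_le (n / d)) (Nat.div_le_self n d),
      ← Finset.prod_Ioc_consecutive (fun i => (1 - (X : PowerSeries ℚ) ^ (p * i))⁻¹)
        (Nat.zero_le (n / p)) (Nat.div_le_self n p),
      rearr]
    rw [coeff_drop_inv n _ _ _ (hgt p hp), coeff_drop_inv n _ _ _ (hgt d hd0),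
      coeff_drop n _ _ _ (hgt (p * d) (by positivity))]
  -- E side
  have hunivimg : ∀ x : ℕ, ((· * x) '' (Set.univ : Set ℕ)) = {m | x ∣ m} := by
    intro x
    ext m
    simp only [Set.mem_image, Set.mem_setOf_eq, Set.mem_univ, true_and]
    constructor
    · rintro ⟨c, rfl⟩; exact Dvd.intro_left c rfl
    · rintro ⟨c, rfl⟩; exact ⟨c, mul_comm c x⟩
  have hSor : filter (· ∈ S) (Finset.Ioc 0 n) =
      filter (fun x => p ∣ x) (Finset.Ioc 0 n) ∪
      filter (fun x => ∃ k, ¬ p ∣ k ∧ x = d * k) (Finset.Ioc 0 n) := by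
    rw [← Finset.filter_or]
    exact Finset.filter_congr fun x _ => by simp only [hSdef, Set.mem_setOf_eq]
  have hdisj : Disjoint (filter (fun x => p ∣ x) (Finset.Ioc 0 n))
      (filter (fun x => ∃ k, ¬ p ∣ k ∧ x = d * k) (Finset.Ioc 0 n)) := by
    rw [Finset.disjoint_left]
    rintro x hx1 hx2
    obtain ⟨-, hpx⟩ := Finset.mem_filter.mp hx1
    obtain ⟨-, k, hk, rfl⟩ := Finset.mem_filter.mp hx2
    exact hk (hdp.symm.dvd_of_dvd_mul_left hpx)
  have hPimg : ∀ m : ℕ, filter (fun x => p ∣ x) (Finset.Ioc 0 m) =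
      (Finset.Ioc 0 (m / p)).image (fun i => p * i) := by
    intro m
    ext x
    simp only [Finset.mem_filter, Finset.mem_Ioc, Finset.mem_image]
    constructor
    · rintro ⟨⟨hx0, hxm⟩, t, rfl⟩
      refine ⟨t, ⟨?_, ?_⟩, rfl⟩
      · rcases Nat.eq_zero_or_pos t with rfl | h
        · simp at hx0
        · exact h
      · rw [Nat.le_div_iff_mul_le hp]
        exact le_trans (le_of_eq (mul_comm t p)) hxm
    · rintro ⟨t, ⟨ht0, htm⟩, rfl⟩
      rw [Nat.le_div_iff_mul_le hp] at htm
      exact ⟨⟨by positivity, le_trans (le_of_eq (mul_comm p t)) htm⟩, t, rfl⟩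
  have hprodP : (∏ x ∈ filter (fun x => p ∣ x) (Finset.Ioc 0 n), (1 - (X : PowerSeries ℚ) ^ x)⁻¹) =
      ∏ i ∈ Finset.Ioc 0 (n / p), (1 - (X : PowerSeries ℚ) ^ (p * i))⁻¹ := by
    rw [hPimg n, Finset.prod_image (fun i _ j _ hEq => Nat.eq_of_mul_eq_mul_left hp hEq)]
  have hDimg : filter (fun x => ∃ k, ¬ p ∣ k ∧ x = d * k) (Finset.Ioc 0 n) =
      (filter (fun k => ¬ p ∣ k) (Finset.Ioc 0 (n / d))).image (fun k => d * k) := by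
    ext x
    simp only [Finset.mem_filter, Finset.mem_Ioc, Finset.mem_image]
    constructor
    · rintro ⟨⟨hx0, hxm⟩, k, hk, rfl⟩
      refine ⟨k, ⟨⟨?_, ?_⟩, hk⟩, rfl⟩
      · rcases Nat.eq_zero_or_pos k with rfl | h
        · simp at hx0
        · exact h
      · rw [Nat.le_div_iff_mul_le hd0]
        exact le_trans (le_of_eq (mul_comm k d)) hxm
    · rintro ⟨k, ⟨⟨hk0, hkm⟩, hk⟩, rfl⟩
      rw [Nat.le_div_iff_mul_le hd0] at hkm
      exact ⟨⟨by positivity, le_trans (le_of_eq (mul_comm d k)) hkm⟩, k, hk, rfl⟩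
  have hprodD : (∏ x ∈ filter (fun x => ∃ k, ¬ p ∣ k ∧ x = d * k) (Finset.Ioc 0 n),
        (1 - (X : PowerSeries ℚ) ^ x)⁻¹) =
      ∏ k ∈ filter (fun k => ¬ p ∣ k) (Finset.Ioc 0 (n / d)), (1 - (X : PowerSeries ℚ) ^ (d * k))⁻¹ := by
    rw [hDimg, Finset.prod_image (fun i _ j _ hEq => Nat.eq_of_mul_eq_mul_left hd0 hEq)]
  have hW : (∏ k ∈ filter (fun k => p ∣ k) (Finset.Ioc 0 (n / d)),
        (1 - (X : PowerSeries ℚ) ^ (d * k))⁻¹) =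
      ∏ i ∈ Finset.Ioc 0 (n / (p * d)), (1 - (X : PowerSeries ℚ) ^ (p * d * i))⁻¹ := by
    rw [hPimg (n / d), Finset.prod_image (fun i _ j _ hEq => Nat.eq_of_mul_eq_mul_left hp hEq),
      Nat.div_div_eq_div_mul, mul_comm d p]
    exact Finset.prod_congr rfl fun i _ => by rw [show d * (p * i) = p * d * i from by ring]
  have hWD := Finset.prod_filter_mul_prod_filter_not (Finset.Ioc 0 (n / d)) (fun k => p ∣ k)
      (fun k => (1 - (X : PowerSeries ℚ) ^ (d * k))⁻¹)
  have hWG : (∏ i ∈ Finset.Ioc 0 (n / (p * d)), (1 - (X : PowerSeries ℚ) ^ (p * d * i))⁻¹) *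
      (∏ i ∈ Finset.Ioc 0 (n / (p * d)), (1 - (X : PowerSeries ℚ) ^ (p * d * i))) = 1 :=
    prod_inv_mul_prod _ _ (fun i hi => by
      have := hposIoc _ i hi
      positivity)
  have hDGA : (∏ k ∈ filter (fun k => ¬ p ∣ k) (Finset.Ioc 0 (n / d)),
        (1 - (X : PowerSeries ℚ) ^ (d * k))⁻¹) =
      (∏ i ∈ Finset.Ioc 0 (n / (p * d)), (1 - (X : PowerSeries ℚ) ^ (p * d * i))) *
      (∏ i ∈ Finset.Ioc 0 (n / d), (1 - (X : PowerSeries ℚ) ^ (d * i))⁻¹) := by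
    calc (∏ k ∈ filter (fun k => ¬ p ∣ k) (Finset.Ioc 0 (n / d)),
          (1 - (X : PowerSeries ℚ) ^ (d * k))⁻¹)
        = ((∏ i ∈ Finset.Ioc 0 (n / (p * d)), (1 - (X : PowerSeries ℚ) ^ (p * d * i))⁻¹) *
           (∏ i ∈ Finset.Ioc 0 (n / (p * d)), (1 - (X : PowerSeries ℚ) ^ (p * d * i)))) *
          (∏ k ∈ filter (fun k => ¬ p ∣ k) (Finset.Ioc 0 (n / d)),
            (1 - (X : PowerSeries ℚ) ^ (d * k))⁻¹) := by rw [hWG, one_mul]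
      _ = (∏ i ∈ Finset.Ioc 0 (n / (p * d)), (1 - (X : PowerSeries ℚ) ^ (p * d * i))) *
          ((∏ k ∈ filter (fun k => p ∣ k) (Finset.Ioc 0 (n / d)),
             (1 - (X : PowerSeries ℚ) ^ (d * k))⁻¹) *
           (∏ k ∈ filter (fun k => ¬ p ∣ k) (Finset.Ioc 0 (n / d)),
             (1 - (X : PowerSeries ℚ) ^ (d * k))⁻¹)) := by rw [← hW]; ring
      _ = _ := by rw [hWD]
  have hEcoeff : (coeff n) (∏ x ∈ filter (· ∈ S) (Finset.Ioc 0 n),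
        indicatorSeries ℚ ((· * x) '' (Set.univ : Set ℕ))) =
      (coeff n) ((∏ i ∈ Finset.Ioc 0 (n / (p * d)), (1 - (X : PowerSeries ℚ) ^ (p * d * i))) *
        ((∏ i ∈ Finset.Ioc 0 (n / d), (1 - (X : PowerSeries ℚ) ^ (d * i))⁻¹) *
         (∏ i ∈ Finset.Ioc 0 (n / p), (1 - (X : PowerSeries ℚ) ^ (p * i))⁻¹))) := by
    have step1 : (∏ x ∈ filter (· ∈ S) (Finset.Ioc 0 n),
          indicatorSeries ℚ ((· * x) '' (Set.univ : Set ℕ))) =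
        ∏ x ∈ filter (· ∈ S) (Finset.Ioc 0 n), (1 - (X : PowerSeries ℚ) ^ x)⁻¹ := by
      refine Finset.prod_congr rfl fun x hx => ?_
      have hx0 : 0 < x := hposIoc n x (Finset.mem_filter.mp hx).1
      rw [hunivimg x]
      exact (num_series x hx0).symm
    congr 1
    rw [step1, hSor, Finset.prod_union hdisj, hprodP, hprodD, hDGA]
    ring
  -- final assembly
  have hB := partialGF_prop ℚ n (Finset.Ioc 0 n) (fun i hi => (Finset.mem_Ioc.mp hi).1)
      (fun _ => C) (fun i _ => ⟨0, hp, 0, by ring⟩)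
  have hE := partialGF_prop ℚ n (filter (· ∈ S) (Finset.Ioc 0 n))
      (fun i hi => (Finset.mem_Ioc.mp (Finset.mem_filter.mp hi).1).1)
      (fun _ => Set.univ) (fun _ _ => Set.mem_univ 0)
  have hfB : filter (fun π : n.Partition => ∀ i ∈ π.parts, ∀ j ≤ p - 1,
        π.parts.count i ≡ j * a [MOD p] → j * d ≤ π.parts.count i) univ =
      filter (fun π : n.Partition =>
        (∀ i, π.parts.count i ∈ C) ∧ ∀ i ∈ π.parts, i ∈ Finset.Ioc 0 n) univ :=
    Finset.filter_congr fun π _ => hBiff π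
  have hfE : filter (fun π : n.Partition => ∀ i ∈ π.parts, ¬ p ∣ i → ∃ s : ℕ, 1 ≤ s ∧ s ≤ p - 1 ∧
        (i : ℤ) ≡ -((s : ℤ) * ((p : ℤ) * r + a)) [ZMOD ((p : ℤ) ^ 2 * r + p * a)]) univ =
      filter (fun π : n.Partition => (∀ i, π.parts.count i ∈ (Set.univ : Set ℕ)) ∧
        ∀ i ∈ π.parts, i ∈ filter (· ∈ S) (Finset.Ioc 0 n)) univ :=
    Finset.filter_congr fun π _ => hEiff π
  rw [Nat.card_eq_fintype_card, Nat.card_eq_fintype_card, Fintype.card_subtype,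
    Fintype.card_subtype, hfB, hfE]
  have hq : ((#(filter (fun π : n.Partition =>
        (∀ i, π.parts.count i ∈ C) ∧ ∀ i ∈ π.parts, i ∈ Finset.Ioc 0 n) univ) : ℕ) : ℚ) =
      ((#(filter (fun π : n.Partition => (∀ i, π.parts.count i ∈ (Set.univ : Set ℕ)) ∧
        ∀ i ∈ π.parts, i ∈ filter (· ∈ S) (Finset.Ioc 0 n)) univ) : ℕ) : ℚ) := by
    calc ((#(filter (fun π : n.Partition =>
            (∀ i, π.parts.count i ∈ C) ∧ ∀ i ∈ π.parts, i ∈ Finset.Ioc 0 n) univ) : ℕ) : ℚ)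
        = (coeff n) (∏ i ∈ Finset.Ioc 0 n, indicatorSeries ℚ ((· * i) '' C)) := hB
      _ = (coeff n) ((∏ i ∈ Finset.Ioc 0 (n / (p * d)), (1 - (X : PowerSeries ℚ) ^ (p * d * i))) *
            ((∏ i ∈ Finset.Ioc 0 (n / d), (1 - (X : PowerSeries ℚ) ^ (d * i))⁻¹) *
             (∏ i ∈ Finset.Ioc 0 (n / p), (1 - (X : PowerSeries ℚ) ^ (p * i))⁻¹))) := hBcoeff
      _ = (coeff n) (∏ x ∈ filter (· ∈ S) (Finset.Ioc 0 n),
            indicatorSeries ℚ ((· * x) '' (Set.univ : Set ℕ))) := hEcoeff.symm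
      _ = _ := hE.symm
  exact_mod_cast hq
end

section
/- Let p > 3 be prime, let a be a positive integer not divisible by p, let r ≥ 0 and m ≥ 1 be integers, and let t be an integer with 0 ≤ t < p such that 24·t·a⁻¹ + 1 is a quadratic nonresidue modulo p, where a⁻¹ denotes the multiplicative inverse of a modulo p. Then for all n ≥ 0, b_{2,r,a,m}(pn + t) ≡ 0 (mod 2). -/
/-- `b p a r m v n` is the number of partitions of `n` such that for every part, its
multiplicity is congruent to `j·a (mod p)` for some `0 ≤ j ≤ v - 1` and satisfies
`j(pr + a) ≤ multiplicity ≤ j(pr + a) + p(m - 1)`. -/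
noncomputable def b (p a r m v n : ℕ) : ℕ :=
  Nat.card {π : n.Partition //
    ∀ i ∈ π.parts, ∃ j, j < v ∧
      π.parts.count i ≡ j * a [MOD p] ∧
      j * (p * r + a) ≤ π.parts.count i ∧
      π.parts.count i ≤ j * (p * r + a) + p * (m - 1)}

namespace B2Aux

open Finset


open Finset

/-- length of the consecutive run at the top of `D`, where `l` should be `D.max'`. -/
def sig (D : Finset ℕ) (l : ℕ) : ℕ := Nat.findGreatest (fun c => ∀ i < c, l - i ∈ D) l

/-- Franklin's involution. -/
def frank (D : Finset ℕ) : Finset ℕ :=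
  if h : D.Nonempty then
    if D.min' h ≤ sig D (D.max' h) then
      if 2 * D.min' h = D.max' h + 1 then D
      else insert (D.max' h + 1) ((D.erase (D.min' h)).erase (D.max' h + 1 - D.min' h))
    else
      if D.max' h = 2 * sig D (D.max' h) then D
      else insert (sig D (D.max' h)) (insert (D.max' h - sig D (D.max' h)) (D.erase (D.max' h)))
  else D

lemma sum_Icc_helper (a b : ℕ) (hab : a ≤ b + 1) :
    (∑ x ∈ Icc a b, x) * 2 + a * (a - 1) = (b + 1) * b := by
  have h2 : (∑ i ∈ Ico 0 a, i) + (∑ i ∈ Ico a (b+1), i) = ∑ i ∈ Ico 0 (b+1), i :=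
    sum_Ico_consecutive _ (Nat.zero_le a) hab
  have h3 := Finset.sum_range_id_mul_two (b+1)
  have h4 := Finset.sum_range_id_mul_two a
  rw [range_eq_Ico] at h3 h4
  simp only [Nat.add_sub_cancel] at h3
  rw [← Finset.Ico_add_one_right_eq_Icc]
  calc (∑ x ∈ Ico a (b+1), x) * 2 + a * (a-1)
      = (∑ x ∈ Ico a (b+1), x) * 2 + (∑ i ∈ Ico 0 a, i) * 2 := by rw [h4]
    _ = ((∑ i ∈ Ico 0 a, i) + ∑ x ∈ Ico a (b+1), x) * 2 := by ring
    _ = (b+1) * b := by rw [h2, h3]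

theorem frank_spec (D : Finset ℕ) (h0 : 0 ∉ D)
    (hgood : ∀ k : ℕ, 24 * (∑ x ∈ D, x) + 1 ≠ k ^ 2) :
    0 ∉ frank D ∧ (∑ x ∈ frank D, x) = ∑ x ∈ D, x ∧ frank D ≠ D ∧ frank (frank D) = D := by
  have h : D.Nonempty := by
    rcases D.eq_empty_or_nonempty with rfl | h
    · exact absurd (by norm_num : 24 * (∑ x ∈ (∅ : Finset ℕ), x) + 1 = 1 ^ 2) (hgood 1)
    · exact h
  set l := D.max' h with hl
  set s := D.min' h with hs
  set σ := sig D l with hσ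
  have hlD : l ∈ D := D.max'_mem h
  have hsD : s ∈ D := D.min'_mem h
  have hmin : ∀ x ∈ D, s ≤ x := fun x hx => D.min'_le x hx
  have hmax : ∀ x ∈ D, x ≤ l := fun x hx => D.le_max' x hx
  have hs1 : 1 ≤ s := Nat.one_le_iff_ne_zero.mpr (fun e => h0 (e ▸ hsD))
  have hsl : s ≤ l := hmax s hsD
  have hl1 : 1 ≤ l := le_trans hs1 hsl
  have hP1 : ∀ i < 1, l - i ∈ D := by
    intro i hi
    interval_cases i
    simpa using hlD
  have hσ1 : 1 ≤ σ := Nat.le_findGreatest hl1 hP1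
  have hσl : σ ≤ l := Nat.findGreatest_le l
  have hrun : ∀ i < σ, l - i ∈ D := by
    have := Nat.findGreatest_spec (P := fun c => ∀ i < c, l - i ∈ D) hl1 hP1
    simpa [hσ, sig] using this
  have hgap : l - σ ∉ D := by
    rcases eq_or_lt_of_le hσl with e | hlt
    · rw [e]; simpa using h0
    · intro hmem
      refine Nat.findGreatest_is_greatest (P := fun c => ∀ i < c, l - i ∈ D)
        (by rw [hσ, sig] at *; omega) hlt ?_
      intro i hi
      rcases Nat.lt_succ_iff_lt_or_eq.mp hi with h' | rfl
      · exact hrun i h'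
      · exact hmem
  have hsl2 : s ≤ l - σ + 1 := by
    have h1 := hrun (σ - 1) (by omega)
    have := hmin _ h1
    omega
  by_cases hA : s ≤ σ
  · -- Case A : the smallest part fits into the top staircase
    have hrunS : ∀ i < s, l - i ∈ D := fun i hi => hrun i (lt_of_lt_of_le hi hA)
    have h2s : 2 * s ≤ l + 1 := by
      have := hmin _ (hrunS (s - 1) (by omega))
      omega
    have hA2 : ¬ (2 * s = l + 1) := by
      intro he
      apply hgood (6 * s - 1)
      have hDI : D = Finset.Icc s l := by
        apply Finset.Subset.antisymm
        · intro x hx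
          exact Finset.mem_Icc.mpr ⟨hmin x hx, hmax x hx⟩
        · intro x hx
          rw [Finset.mem_Icc] at hx
          have hx2 : x = l - (l - x) := by omega
          rw [hx2]
          exact hrunS (l - x) (by omega)
      have hsum := sum_Icc_helper s l (by omega)
      rw [hDI]
      zify [hs1, show (1:ℕ) ≤ 6 * s by omega] at hsum ⊢
      have hle : (l : ℤ) = 2 * s - 1 := by
        have : (2 * s : ℤ) = l + 1 := by exact_mod_cast congrArg (Nat.cast (R := ℤ)) he
        omega
      nlinarith [hsum, hle]
    have hsltop : s < l + 1 - s := by omega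
    have htopD : l + 1 - s ∈ D := by
      have h1 := hrunS (s - 1) (by omega)
      have he : l + 1 - s = l - (s - 1) := by omega
      rwa [he]
    have hl1nD : l + 1 ∉ D := fun hx => by have := hmax _ hx; omega
    set E := insert (l + 1) ((D.erase s).erase (l + 1 - s)) with hE
    have hfE : frank D = E := by
      unfold frank
      rw [dif_pos h, ← hl, ← hs, ← hσ, if_pos hA, if_neg hA2, hE]
    have hl1nE' : l + 1 ∉ (D.erase s).erase (l + 1 - s) := fun hx =>
      hl1nD (Finset.mem_of_mem_erase (Finset.mem_of_mem_erase hx))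
    have htopE : l + 1 - s ∈ D.erase s := Finset.mem_erase.mpr ⟨by omega, htopD⟩
    have e1 : (∑ x ∈ D.erase s, x) + s = ∑ x ∈ D, x := Finset.sum_erase_add D _ hsD
    have e2 : (∑ x ∈ (D.erase s).erase (l + 1 - s), x) + (l + 1 - s) = ∑ x ∈ D.erase s, x :=
      Finset.sum_erase_add _ _ htopE
    have hsumE : (∑ x ∈ E, x) = ∑ x ∈ D, x := by
      rw [hE, Finset.sum_insert hl1nE']
      omega
    have hmemE : ∀ x, x ∈ E ↔ (x = l + 1 ∨ (x ∈ D ∧ x ≠ s ∧ x ≠ l + 1 - s)) := by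
      intro x
      rw [hE]
      simp only [Finset.mem_insert, Finset.mem_erase]
      tauto
    have hEne : E.Nonempty := ⟨l + 1, hE ▸ Finset.mem_insert_self _ _⟩
    have hEmax : E.max' hEne = l + 1 := by
      apply le_antisymm
      · apply Finset.max'_le
        intro y hy
        rcases (hmemE y).mp hy with rfl | ⟨hyD, _, _⟩
        · exact le_refl _
        · exact le_trans (hmax _ hyD) (by omega)
      · exact Finset.le_max' _ _ ((hmemE _).mpr (Or.inl rfl))
    have hEmin : s < E.min' hEne := by
      rw [Finset.lt_min'_iff]
      intro y hy
      rcases (hmemE y).mp hy with rfl | ⟨hyD, hy1, _⟩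
      · omega
      · have := hmin _ hyD; omega
    have hPEs : ∀ i < s, l + 1 - i ∈ E := by
      intro i hi
      rcases Nat.eq_zero_or_pos i with rfl | hi1
      · simpa using (hmemE (l + 1)).mpr (Or.inl rfl)
      · apply (hmemE _).mpr
        refine Or.inr ⟨?_, by omega, by omega⟩
        have he : l + 1 - i = l - (i - 1) := by omega
        rw [he]; exact hrunS (i - 1) (by omega)
    have hσE : sig E (l + 1) = s := by
      apply le_antisymm
      · by_contra hc
        push_neg at hc
        have hPE : ∀ i < sig E (l + 1), l + 1 - i ∈ E := by
          have := Nat.findGreatest_spec (P := fun c => ∀ i < c, l + 1 - i ∈ E)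
            (show s ≤ l + 1 by omega) hPEs
          simpa [sig] using this
        have h1 := hPE s hc
        rcases (hmemE _).mp h1 with h' | ⟨_, _, h3⟩
        · omega
        · exact h3 rfl
      · have := Nat.le_findGreatest (P := fun c => ∀ i < c, l + 1 - i ∈ E)
          (show s ≤ l + 1 by omega) hPEs
        simpa [sig] using this
    have hfEE : frank E = D := by
      unfold frank
      rw [dif_pos hEne, hEmax, hσE, if_neg (by omega : ¬ E.min' hEne ≤ s),
        if_neg (by omega : ¬ (l + 1 = 2 * s)), hE,
        Finset.erase_insert hl1nE', Finset.insert_erase htopE, Finset.insert_erase hsD]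
    refine ⟨?_, by rw [hfE]; exact hsumE, ?_, ?_⟩
    · rw [hfE]
      intro h0E
      rcases (hmemE 0).mp h0E with e | ⟨hmem, _, _⟩
      · omega
      · exact h0 hmem
    · rw [hfE]
      intro he
      apply hl1nD
      rw [← he]
      exact (hmemE _).mpr (Or.inl rfl)
    · rw [hfE, hfEE]
  · -- Case B : the staircase is shorter than the smallest part
    push_neg at hA
    have hB2 : ¬ (l = 2 * σ) := by
      intro he
      apply hgood (6 * σ + 1)
      have hDI : D = Finset.Icc (σ + 1) l := by
        apply Finset.Subset.antisymm
        · intro x hx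
          exact Finset.mem_Icc.mpr ⟨by have := hmin x hx; omega, hmax x hx⟩
        · intro x hx
          rw [Finset.mem_Icc] at hx
          have hx2 : x = l - (l - x) := by omega
          rw [hx2]
          exact hrun (l - x) (by omega)
      have hsum := sum_Icc_helper (σ + 1) l (by omega)
      simp only [Nat.add_sub_cancel] at hsum
      rw [hDI]
      zify at hsum ⊢
      have hle : (l : ℤ) = 2 * σ := by exact_mod_cast congrArg (Nat.cast (R := ℤ)) he
      nlinarith [hsum, hle]
    have h2σ : 2 * σ < l := by
      rcases Nat.lt_or_ge (2 * σ) l with h' | h'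
      · exact h'
      · omega
    have hσnD : σ ∉ D := fun hx => by have := hmin _ hx; omega
    set E := insert σ (insert (l - σ) (D.erase l)) with hE
    have hfE : frank D = E := by
      unfold frank
      rw [dif_pos h, ← hl, ← hs, ← hσ, if_neg (by omega : ¬ s ≤ σ), if_neg hB2, hE]
    have hσnE' : σ ∉ insert (l - σ) (D.erase l) := by
      intro hx
      rcases Finset.mem_insert.mp hx with e | hmem
      · omega
      · exact hσnD (Finset.mem_of_mem_erase hmem)
    have hlσnE' : l - σ ∉ D.erase l := fun hx => hgap (Finset.mem_of_mem_erase hx)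
    have e1 : (∑ x ∈ D.erase l, x) + l = ∑ x ∈ D, x := Finset.sum_erase_add D _ hlD
    have hsumE : (∑ x ∈ E, x) = ∑ x ∈ D, x := by
      rw [hE, Finset.sum_insert hσnE', Finset.sum_insert hlσnE']
      omega
    have hmemE : ∀ x, x ∈ E ↔ (x = σ ∨ x = l - σ ∨ (x ∈ D ∧ x ≠ l)) := by
      intro x
      rw [hE]
      simp only [Finset.mem_insert, Finset.mem_erase]
      tauto
    have hEne : E.Nonempty := ⟨σ, hE ▸ Finset.mem_insert_self _ _⟩
    have hEmax : E.max' hEne = l - 1 := by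
      apply le_antisymm
      · apply Finset.max'_le
        intro y hy
        rcases (hmemE y).mp hy with rfl | rfl | ⟨hyD, hy1⟩
        · omega
        · omega
        · have := hmax _ hyD; omega
      · apply Finset.le_max'
        rcases eq_or_lt_of_le hσ1 with e | hσ2
        · apply (hmemE _).mpr
          right; left
          omega
        · apply (hmemE _).mpr
          right; right
          refine ⟨?_, by omega⟩
          have := hrun 1 hσ2
          simpa using this
    have hEmin : E.min' hEne = σ := by
      apply le_antisymm
      · exact Finset.min'_le _ _ ((hmemE _).mpr (Or.inl rfl))
      · apply Finset.le_min'
        intro y hy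
        rcases (hmemE y).mp hy with rfl | rfl | ⟨hyD, _⟩
        · exact le_refl _
        · omega
        · have := hmin _ hyD; omega
    have hPEσ : ∀ i < σ, l - 1 - i ∈ E := by
      intro i hi
      rcases eq_or_lt_of_le (Nat.succ_le_of_lt hi) with e | hlt
      · apply (hmemE _).mpr
        right; left
        omega
      · apply (hmemE _).mpr
        right; right
        refine ⟨?_, by omega⟩
        have he : l - 1 - i = l - (i + 1) := by omega
        rw [he]
        exact hrun (i + 1) hlt
    have hAce : E.min' hEne ≤ sig E (E.max' hEne) := by
      rw [hEmax, hEmin]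
      have := Nat.le_findGreatest (P := fun c => ∀ i < c, l - 1 - i ∈ E)
        (show σ ≤ l - 1 by omega) hPEσ
      simpa [sig] using this
    have hfEE : frank E = D := by
      unfold frank
      rw [dif_pos hEne, if_pos hAce, hEmax, hEmin,
        if_neg (by omega : ¬ (2 * σ = l - 1 + 1)),
        (by omega : l - 1 + 1 = l), hE,
        Finset.erase_insert hσnE', Finset.erase_insert hlσnE', Finset.insert_erase hlD]
    refine ⟨?_, by rw [hfE]; exact hsumE, ?_, ?_⟩
    · rw [hfE]
      intro h0E
      rcases (hmemE 0).mp h0E with e | e | ⟨hmem, _⟩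
      · omega
      · omega
      · exact h0 hmem
    · rw [hfE]
      intro he
      have hlE : l ∈ E := he ▸ hlD
      rcases (hmemE l).mp hlE with e | e | ⟨_, e⟩
      · omega
      · omega
      · exact e rfl
    · rw [hfE, hfEE]



/-- The set of parts whose multiplicity is not divisible by `p`. -/
def Dset (p : ℕ) (s : Multiset ℕ) : Finset ℕ := s.toFinset.filter fun i => ¬ p ∣ s.count i

lemma mem_Dset {p : ℕ} {s : Multiset ℕ} {i : ℕ} : i ∈ Dset p s ↔ ¬ p ∣ s.count i := by
  simp only [Dset, Finset.mem_filter, Multiset.mem_toFinset, and_iff_right_iff_imp]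
  intro hd
  by_contra hi
  exact hd (by simp [Multiset.count_eq_zero.mpr hi])

/-- The new multiplicity of `i` after toggling membership of the `j = 1` class from
`Dset p s` to `D'`. -/
def nextc (p q : ℕ) (s : Multiset ℕ) (D' : Finset ℕ) (i : ℕ) : ℕ :=
  if i ∈ D' then (if i ∈ Dset p s then s.count i else s.count i + q)
  else (if i ∈ Dset p s then s.count i - q else s.count i)

/-- The new partition (as a multiset). -/
def nextParts (p q : ℕ) (s : Multiset ℕ) (D' : Finset ℕ) : Multiset ℕ :=
  ∑ i ∈ s.toFinset ∪ D', Multiset.replicate (nextc p q s D' i) i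

lemma sum_replicates (U : Finset ℕ) (f : ℕ → ℕ) :
    (∑ i ∈ U, Multiset.replicate (f i) i).sum = ∑ i ∈ U, f i * i := by
  induction U using Finset.cons_induction with
  | empty => simp
  | cons a s ha ih =>
      rw [Finset.sum_cons, Finset.sum_cons, Multiset.sum_add, ih, Multiset.sum_replicate,
        smul_eq_mul]

lemma count_nextParts (p q : ℕ) (s : Multiset ℕ) (D' : Finset ℕ) (j : ℕ) :
    (nextParts p q s D').count j = nextc p q s D' j := by
  rw [nextParts, Multiset.count_sum']
  by_cases hj : j ∈ s.toFinset ∪ D'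
  · rw [Finset.sum_eq_single_of_mem j hj (fun b _ hbj => by
      rw [Multiset.count_replicate, if_neg hbj])]
    rw [Multiset.count_replicate, if_pos rfl]
  · rw [Finset.sum_eq_zero (fun b hb => by
      rw [Multiset.count_replicate, if_neg (fun e => hj (by rw [← e]; exact hb))])]
    have h1 : j ∉ s.toFinset := fun hmem => hj (Finset.mem_union_left _ hmem)
    have h2 : j ∉ D' := fun hmem => hj (Finset.mem_union_right _ hmem)
    have hc : s.count j = 0 := by
      rw [Multiset.count_eq_zero, ← Multiset.mem_toFinset]
      exact h1
    have h3 : j ∉ Dset p s := by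
      rw [mem_Dset, hc]
      simp
    rw [nextc, if_neg h2, if_neg h3, hc]

lemma msum (s : Multiset ℕ) : ∑ i ∈ s.toFinset, s.count i * i = s.sum := by
  conv_rhs => rw [← Multiset.toFinset_sum_count_nsmul_eq s]
  rw [show (∑ a ∈ s.toFinset, s.count a • ({a} : Multiset ℕ)) =
      ∑ a ∈ s.toFinset, Multiset.replicate (s.count a) a by
    refine Finset.sum_congr rfl fun a _ => ?_
    rw [Multiset.nsmul_singleton]]
  rw [sum_replicates]


theorem main_step (p q M N a : ℕ) (hq0 : 0 < q) (hpa : ¬ p ∣ a) (hqa : q ≡ a [MOD p])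
    (hgoodN : ∀ S k : ℕ, a * S ≡ N [MOD p] → 24 * S + 1 ≠ k ^ 2)
    (π : N.Partition)
    (hπ : ∀ i ∈ π.parts, ∃ j, j < 2 ∧ π.parts.count i ≡ j * a [MOD p] ∧
      j * q ≤ π.parts.count i ∧ π.parts.count i ≤ j * q + M) :
    (∀ x ∈ nextParts p q π.parts (frank (Dset p π.parts)), 0 < x) ∧
    (nextParts p q π.parts (frank (Dset p π.parts))).sum = N ∧
    (∀ i ∈ nextParts p q π.parts (frank (Dset p π.parts)), ∃ j, j < 2 ∧
      (nextParts p q π.parts (frank (Dset p π.parts))).count i ≡ j * a [MOD p] ∧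
      j * q ≤ (nextParts p q π.parts (frank (Dset p π.parts))).count i ∧
      (nextParts p q π.parts (frank (Dset p π.parts))).count i ≤ j * q + M) ∧
    nextParts p q π.parts (frank (Dset p π.parts)) ≠ π.parts ∧
    nextParts p q (nextParts p q π.parts (frank (Dset p π.parts)))
      (frank (Dset p (nextParts p q π.parts (frank (Dset p π.parts))))) = π.parts := by
  set s := π.parts with hsdef
  set D := Dset p s with hDdef
  set D' := frank D with hD'def
  set s' := nextParts p q s D' with hs'def
  have hpos : ∀ i ∈ s, 0 < i := fun i hi => π.parts_pos hi
  have h0D : 0 ∉ D := by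
    intro h
    have h1 : (0:ℕ) ∈ s.toFinset := Finset.mem_of_mem_filter _ h
    exact absurd (hpos 0 (Multiset.mem_toFinset.mp h1)) (lt_irrefl 0)
  have hfacts1 : ∀ i ∈ D, s.count i ≡ a [MOD p] ∧ q ≤ s.count i ∧ s.count i ≤ q + M := by
    intro i hi
    have hnd : ¬ p ∣ s.count i := mem_Dset.mp hi
    have his : i ∈ s := by
      rw [← Multiset.count_pos]
      rcases Nat.eq_zero_or_pos (s.count i) with e | h'
      · exact absurd (e ▸ dvd_zero p) hnd
      · exact h'
    obtain ⟨j, hj2, hmod, hlb, hub⟩ := hπ i his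
    interval_cases j
    · rw [zero_mul] at hmod
      exact absurd (Nat.modEq_zero_iff_dvd.mp hmod) hnd
    · rw [one_mul] at hmod hlb hub
      exact ⟨hmod, hlb, hub⟩
  have hfacts0 : ∀ i, i ∉ D → p ∣ s.count i ∧ s.count i ≤ M := by
    intro i hi
    have hd : p ∣ s.count i := by
      by_contra hnd
      exact hi (mem_Dset.mpr hnd)
    refine ⟨hd, ?_⟩
    rcases Nat.eq_zero_or_pos (s.count i) with e | h'
    · omega
    · obtain ⟨j, hj2, hmod, hlb, hub⟩ := hπ i (Multiset.count_pos.mp h')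
      interval_cases j
      · simpa using hub
      · rw [one_mul] at hmod
        exfalso
        apply hpa
        have h1 : a ≡ s.count i [MOD p] := hmod.symm
        have h2 : s.count i ≡ 0 [MOD p] := Nat.modEq_zero_iff_dvd.mpr hd
        exact Nat.modEq_zero_iff_dvd.mp (h1.trans h2)
  have hSN : a * (∑ x ∈ D, x) ≡ N [MOD p] := by
    rw [← ZMod.natCast_eq_natCast_iff]
    have hNs : (∑ i ∈ s.toFinset, s.count i * i) = N := by rw [msum, π.parts_sum]
    push_cast
    calc (a : ZMod p) * (∑ x ∈ D, (x : ZMod p))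
        = ∑ x ∈ D, (a : ZMod p) * x := by rw [Finset.mul_sum]
      _ = ∑ i ∈ s.toFinset, (s.count i : ZMod p) * i := by
          rw [hDdef, Dset, Finset.sum_filter]
          refine Finset.sum_congr rfl fun i hi => ?_
          by_cases hid : p ∣ s.count i
          · rw [if_neg (not_not_intro hid)]
            obtain ⟨k, hk⟩ := hid
            rw [hk]
            push_cast [ZMod.natCast_self]
            ring
          · rw [if_pos hid]
            have hmod := (hfacts1 i (mem_Dset.mpr hid)).1
            rw [(ZMod.natCast_eq_natCast_iff _ _ _).mpr hmod]
      _ = (N : ZMod p) := by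
          have h2 := congrArg (Nat.cast (R := ZMod p)) hNs
          push_cast at h2
          exact h2
  have hgoodD : ∀ k : ℕ, 24 * (∑ x ∈ D, x) + 1 ≠ k ^ 2 := fun k => hgoodN _ k hSN
  obtain ⟨h0D', hsumD', hneD', hffD⟩ := frank_spec D h0D hgoodD
  rw [← hD'def] at h0D' hsumD' hneD' hffD
  have hcount : ∀ j, s'.count j = nextc p q s D' j := count_nextParts p q s D'
  have hpos' : ∀ x ∈ s', 0 < x := by
    intro x hx
    rw [hs'def, nextParts] at hx
    obtain ⟨i, hiU, hxi⟩ := Multiset.mem_sum.mp hx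
    obtain rfl := Multiset.eq_of_mem_replicate hxi
    rcases Finset.mem_union.mp hiU with h' | h'
    · exact hpos _ (Multiset.mem_toFinset.mp h')
    · have : x ≠ 0 := fun e => h0D' (e ▸ h')
      omega
  have hq_le : ∀ i ∈ D, q ≤ s.count i := fun i hi => (hfacts1 i hi).2.1
  set U := s.toFinset ∪ D' with hUdef
  have hDU : D ⊆ s.toFinset := Finset.filter_subset _ _
  have hDD'U : D \ D' ⊆ U := fun x hx => Finset.mem_union_left _ (hDU (Finset.mem_sdiff.mp hx).1)
  have hD'DU : D' \ D ⊆ U := fun x hx => Finset.mem_union_right _ (Finset.mem_sdiff.mp hx).1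
  have hkey : (∑ i ∈ U, nextc p q s D' i * i) + q * (∑ x ∈ D \ D', x)
      = (∑ i ∈ U, s.count i * i) + q * (∑ x ∈ D' \ D, x) := by
    have e1 : ∑ i ∈ U, (if i ∈ D \ D' then q * i else 0) = q * ∑ x ∈ D \ D', x := by
      rw [Finset.sum_ite_mem, Finset.inter_eq_right.mpr hDD'U, Finset.mul_sum]
    have e2 : ∑ i ∈ U, (if i ∈ D' \ D then q * i else 0) = q * ∑ x ∈ D' \ D, x := by
      rw [Finset.sum_ite_mem, Finset.inter_eq_right.mpr hD'DU, Finset.mul_sum]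
    rw [← e1, ← e2, ← Finset.sum_add_distrib, ← Finset.sum_add_distrib]
    refine Finset.sum_congr rfl fun i _ => ?_
    by_cases h1 : i ∈ D <;> by_cases h2 : i ∈ D'
    · rw [nextc, if_pos h2, if_pos h1,
        if_neg (fun hc => (Finset.mem_sdiff.mp hc).2 h2),
        if_neg (fun hc => (Finset.mem_sdiff.mp hc).2 h1)]
    · rw [nextc, if_neg h2, if_pos h1,
        if_pos (Finset.mem_sdiff.mpr ⟨h1, h2⟩),
        if_neg (fun hc => h2 (Finset.mem_sdiff.mp hc).1), add_zero,
        ← add_mul, Nat.sub_add_cancel (hq_le i h1)]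
    · rw [nextc, if_pos h2, if_neg h1,
        if_neg (fun hc => h1 (Finset.mem_sdiff.mp hc).1),
        if_pos (Finset.mem_sdiff.mpr ⟨h2, h1⟩), add_zero, add_mul]
    · rw [nextc, if_neg h2, if_neg h1,
        if_neg (fun hc => h2 (Finset.mem_sdiff.mp hc).1),
        if_neg (fun hc => h1 (Finset.mem_sdiff.mp hc).1)]
  have hsum' : s'.sum = N := by
    rw [hs'def, nextParts, sum_replicates]
    have hAB : (∑ x ∈ D \ D', x) = (∑ x ∈ D' \ D, x) := by
      have e3 := Finset.sum_inter_add_sum_sdiff D D' (fun x => x)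
      have e4 := Finset.sum_inter_add_sum_sdiff D' D (fun x => x)
      rw [Finset.inter_comm] at e4
      omega
    rw [hAB] at hkey
    have hXY := Nat.add_right_cancel hkey
    have hU : (∑ i ∈ U, s.count i * i) = N := by
      have h5 := Finset.sum_subset (f := fun i => Multiset.count i s * i)
        (Finset.subset_union_left : s.toFinset ⊆ U)
        (fun x _ hx => by
          have hc0 : s.count x = 0 := by
            rw [Multiset.count_eq_zero, ← Multiset.mem_toFinset]
            exact hx
          simp [hc0])
      rw [← h5, msum, π.parts_sum]
    rw [hXY, hU]
  have hqa' : ∀ i, i ∉ D → s.count i + q ≡ a [MOD p] := by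
    intro i hi
    have hd := (hfacts0 i hi).1
    have h1 : s.count i + q ≡ 0 + q [MOD p] := Nat.ModEq.add_right q (Nat.modEq_zero_iff_dvd.mpr hd)
    rw [zero_add] at h1
    exact h1.trans hqa
  have hsubmod : ∀ i ∈ D, s.count i - q ≡ 0 [MOD p] := by
    intro i hi
    have h1 : s.count i ≡ a [MOD p] := (hfacts1 i hi).1
    have h2 : q ≡ s.count i [MOD p] := hqa.trans h1.symm
    exact Nat.modEq_zero_iff_dvd.mpr ((Nat.modEq_iff_dvd' (hfacts1 i hi).2.1).mp h2)
  have hpred' : ∀ i ∈ s', ∃ j, j < 2 ∧ s'.count i ≡ j * a [MOD p] ∧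
      j * q ≤ s'.count i ∧ s'.count i ≤ j * q + M := by
    intro i _
    rw [hcount i]
    by_cases h2 : i ∈ D' <;> by_cases h1 : i ∈ D
    · refine ⟨1, by omega, ?_⟩
      simp only [nextc, ← hDdef, if_pos h2, if_pos h1, one_mul]
      exact ⟨(hfacts1 i h1).1, (hfacts1 i h1).2.1, (hfacts1 i h1).2.2⟩
    · refine ⟨1, by omega, ?_⟩
      simp only [nextc, ← hDdef, if_pos h2, if_neg h1, one_mul]
      have h3 := hfacts0 i h1
      exact ⟨hqa' i h1, by omega, by omega⟩
    · refine ⟨0, by omega, ?_⟩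
      simp only [nextc, ← hDdef, if_neg h2, if_pos h1, zero_mul]
      have h3 := hfacts1 i h1
      exact ⟨hsubmod i h1, by omega, by omega⟩
    · refine ⟨0, by omega, ?_⟩
      simp only [nextc, ← hDdef, if_neg h2, if_neg h1, zero_mul]
      have h3 := hfacts0 i h1
      exact ⟨Nat.modEq_zero_iff_dvd.mpr h3.1, by omega, by omega⟩
  have hDs' : Dset p s' = D' := by
    apply Finset.ext
    intro i
    rw [mem_Dset, hcount i]
    constructor
    · intro hnd
      by_contra h2
      apply hnd
      by_cases h1 : i ∈ D
      · simp only [nextc, ← hDdef, if_neg h2, if_pos h1]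
        exact Nat.modEq_zero_iff_dvd.mp (hsubmod i h1)
      · simp only [nextc, ← hDdef, if_neg h2, if_neg h1]
        exact (hfacts0 i h1).1
    · intro h2
      by_cases h1 : i ∈ D
      · simp only [nextc, ← hDdef, if_pos h2, if_pos h1]
        exact mem_Dset.mp h1
      · simp only [nextc, ← hDdef, if_pos h2, if_neg h1]
        intro hdvd
        apply hpa
        have h3 : s.count i + q ≡ 0 [MOD p] := Nat.modEq_zero_iff_dvd.mpr hdvd
        exact Nat.modEq_zero_iff_dvd.mp ((hqa' i h1).symm.trans h3)
  have hne : s' ≠ s := by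
    intro he
    have h3 := hDs'
    rw [he] at h3
    exact hneD' h3.symm
  have hdouble : nextParts p q s' (frank (Dset p s')) = s := by
    rw [hDs', hD'def, hffD]
    rw [Multiset.ext]
    intro j
    rw [count_nextParts]
    by_cases h1 : j ∈ D <;> by_cases h2 : j ∈ D'
    · rw [nextc, hDs', if_pos h1, if_pos h2, hcount j, nextc, if_pos h2, if_pos h1]
    · rw [nextc, hDs', if_pos h1, if_neg h2, hcount j, nextc, if_neg h2, if_pos h1]
      exact Nat.sub_add_cancel (hq_le j h1)
    · rw [nextc, hDs', if_neg h1, if_pos h2, hcount j, nextc, if_pos h2, if_neg h1]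
      omega
    · rw [nextc, hDs', if_neg h1, if_neg h2, hcount j, nextc, if_neg h2, if_neg h1]
  exact ⟨hpos', hsum', hpred', hne, hdouble⟩

lemma even_card_aux {α : Type*} [Fintype α] [DecidableEq α] (f : α → α)
    (h2 : ∀ x, f (f x) = x) (h1 : ∀ x, f x ≠ x) : Fintype.card α % 2 = 0 := by
  suffices h : ∀ s : Finset α, (∀ x ∈ s, f x ∈ s) → s.card % 2 = 0 by
    exact h Finset.univ (fun x _ => Finset.mem_univ _)
  intro s
  induction s using Finset.strongInductionOn with
  | _ s ih =>
    intro hcl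
    rcases Finset.eq_empty_or_nonempty s with rfl | ⟨x, hx⟩
    · simp
    · have hfx : f x ∈ s := hcl x hx
      have hxfx : f x ≠ x := h1 x
      have hfxe : f x ∈ s.erase x := Finset.mem_erase.mpr ⟨hxfx, hfx⟩
      have hts : (s.erase x).erase (f x) ⊂ s :=
        Finset.ssubset_of_subset_of_ssubset (Finset.erase_subset _ _) (Finset.erase_ssubset hx)
      have hclt : ∀ y ∈ (s.erase x).erase (f x), f y ∈ (s.erase x).erase (f x) := by
        intro y hy
        obtain ⟨hy1, hy2, hy3⟩ : y ≠ f x ∧ y ≠ x ∧ y ∈ s := by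
          have h4 := Finset.mem_erase.mp hy
          have h5 := Finset.mem_erase.mp h4.2
          exact ⟨h4.1, h5.1, h5.2⟩
        refine Finset.mem_erase.mpr ⟨?_, Finset.mem_erase.mpr ⟨?_, hcl y hy3⟩⟩
        · intro e
          apply hy2
          have h6 := congrArg f e
          rwa [h2, h2] at h6
        · intro e
          exact hy1 (by rw [← e, h2])
      have hcard1 : ((s.erase x).erase (f x)).card = s.card - 2 := by
        rw [Finset.card_erase_of_mem hfxe, Finset.card_erase_of_mem hx]
        omega
      have hcard2 : 2 ≤ s.card := by
        have h7 := Finset.card_erase_of_mem hx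
        have h6 : 0 < (s.erase x).card := Finset.card_pos.mpr ⟨f x, hfxe⟩
        omega
      have h8 := ih _ hts hclt
      omega

end B2Aux

/-- Let `p > 3` be prime, `a` a positive integer not divisible by `p`, `r ≥ 0`, `m ≥ 1`,
and let `0 ≤ t < p` be such that `24·t·a⁻¹ + 1` is a quadratic nonresidue modulo `p`
(`a⁻¹` being the inverse of `a` modulo `p`). Then `b_{2,r,a,m}(pn + t) ≡ 0 (mod 2)` for
all `n ≥ 0`. -/
theorem b_two_congruence (p a r m t : ℕ) (hp : p.Prime) (hp3 : 3 < p)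
    (ha : 0 < a) (hpa : ¬ p ∣ a) (hm : 1 ≤ m) (ht : t < p)
    (hqnr : ¬ IsSquare (24 * (t : ZMod p) * (a : ZMod p)⁻¹ + 1)) :
    ∀ n : ℕ, b p a r m 2 (p * n + t) % 2 = 0 := by
  intro n
  haveI := Fact.mk hp
  classical
  have hq0 : 0 < p * r + a := Nat.lt_of_lt_of_le ha (Nat.le_add_left a _)
  have hqa : p * r + a ≡ a [MOD p] := by
    show (p * r + a) % p = a % p
    conv_lhs => rw [add_comm]
    exact Nat.add_mul_mod_self_left a p r
  have hgoodN : ∀ S k : ℕ, a * S ≡ p * n + t [MOD p] → 24 * S + 1 ≠ k ^ 2 := by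
    intro S k hSN hk
    apply hqnr
    have h1 : ((a * S : ℕ) : ZMod p) = ((p * n + t : ℕ) : ZMod p) :=
      (ZMod.natCast_eq_natCast_iff _ _ _).mpr hSN
    push_cast at h1
    rw [ZMod.natCast_self, zero_mul, zero_add] at h1
    have ha0 : (a : ZMod p) ≠ 0 := by
      rw [Ne, ZMod.natCast_eq_zero_iff]
      exact hpa
    have h2 : ((24 * S + 1 : ℕ) : ZMod p) = ((k ^ 2 : ℕ) : ZMod p) := by rw [hk]
    push_cast at h2
    have h3 : 24 * (t : ZMod p) * (a : ZMod p)⁻¹ + 1 = (k : ZMod p) ^ 2 := by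
      rw [← h1]
      have h4 : 24 * ((a : ZMod p) * S) * (a : ZMod p)⁻¹
          = 24 * (S : ZMod p) * ((a : ZMod p) * (a : ZMod p)⁻¹) := by ring
      rw [h4, mul_inv_cancel₀ ha0, mul_one]
      exact h2
    rw [h3]
    exact ⟨(k : ZMod p), by ring⟩
  simp only [b]
  haveI hfin : Fintype {π : (p * n + t).Partition //
      ∀ i ∈ π.parts, ∃ j, j < 2 ∧
        π.parts.count i ≡ j * a [MOD p] ∧
        j * (p * r + a) ≤ π.parts.count i ∧
        π.parts.count i ≤ j * (p * r + a) + p * (m - 1)} := Subtype.fintype _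
  rw [Nat.card_eq_fintype_card]
  have hms := fun (π : (p * n + t).Partition) hπ =>
    B2Aux.main_step p (p * r + a) (p * (m - 1)) (p * n + t) a hq0 hpa hqa hgoodN π hπ
  refine B2Aux.even_card_aux
    (fun x => ⟨⟨B2Aux.nextParts p (p * r + a) x.1.parts (B2Aux.frank (B2Aux.Dset p x.1.parts)),
      fun {i} hi => (hms x.1 x.2).1 i hi, (hms x.1 x.2).2.1⟩, (hms x.1 x.2).2.2.1⟩)
    (fun x => ?_) (fun x he => ?_)
  · apply Subtype.ext
    apply Nat.Partition.ext
    exact (hms x.1 x.2).2.2.2.2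
  · exact (hms x.1 x.2).2.2.2.1 (congrArg (fun y => y.1.parts) he)
end
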